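/- Let * be a continuous t-norm, T an algebra of truth values for *, and L = Taut(T,*) the real-valued logic induced by (T,*). Then L satisfies principle P2 if and only if L extends Łukasiewicz logic, i.e. Taut([0,1],⊙) ⊆ L, where x⊙y = max(0, x+y−1). -/

import Mathlib

open Set

noncomputable section

/-- The real unit interval `[0,1]` as a subset of `ℝ`. -/
def I01 : Set ℝ := Set.Icc 0 1

/-- A continuous t-norm on `[0,1]`. -/
structure ContTNorm where
  mul : ℝ → ℝ → ℝ
  maps_to : ∀ x ∈ I01, ∀ y ∈ I01, mul x y ∈ I01
  continuousOn : ContinuousOn (fun p : ℝ × ℝ => mul p.1 p.2) (I01 ×ˢ I01)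
  assoc : ∀ x ∈ I01, ∀ y ∈ I01, ∀ z ∈ I01, mul (mul x y) z = mul x (mul y z)
  comm : ∀ x ∈ I01, ∀ y ∈ I01, mul x y = mul y x
  mono : ∀ a ∈ I01, ∀ b ∈ I01, ∀ c ∈ I01, b ≤ c → mul a b ≤ mul a c
  one_mul' : ∀ x ∈ I01, mul 1 x = x

/-- The residuum of a t-norm: `x →* y := sup { c ∈ [0,1] | x * c ≤ y }`. -/
def resid (t : ContTNorm) (x y : ℝ) : ℝ :=
  sSup {c | c ∈ I01 ∧ t.mul x c ≤ y}

/-- An algebra of truth values for the t-norm `t`: a subset of `[0,1]` containing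
`0` and `1` and closed under `t.mul` and its residuum. -/
structure TruthAlg (t : ContTNorm) where
  carrier : Set ℝ
  subset : carrier ⊆ I01
  zero_mem : (0:ℝ) ∈ carrier
  one_mem : (1:ℝ) ∈ carrier
  mul_mem : ∀ x ∈ carrier, ∀ y ∈ carrier, t.mul x y ∈ carrier
  resid_mem : ∀ x ∈ carrier, ∀ y ∈ carrier, resid t x y ∈ carrier

/-- Propositional formulas over countably many variables with `&`, `→`, `⊥`. -/
inductive Formula : Type
  | var : ℕ → Formula
  | bot : Formula
  | conj : Formula → Formula → Formula
  | impl : Formula → Formula → Formula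

/-- `α ↔ β := (α → β) & (β → α)`. -/
def Formula.iff (a b : Formula) : Formula := .conj (.impl a b) (.impl b a)

/-- The valuation determined by an assignment `v` of reals to the variables. -/
def eval (t : ContTNorm) (v : ℕ → ℝ) : Formula → ℝ
  | .var i => v i
  | .bot => 0
  | .conj a b => t.mul (eval t v a) (eval t v b)
  | .impl a b => resid t (eval t v a) (eval t v b)

/-- A valuation into `(T, t)` is (identified with) an assignment of values of `T`
to the propositional variables. -/
def IsValuation (t : ContTNorm) (T : TruthAlg t) (v : ℕ → ℝ) : Prop :=
  ∀ i, v i ∈ T.carrier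

/-- The logic induced by `(T, t)`: all formulas true to degree 1 under every valuation. -/
def Taut (t : ContTNorm) (T : TruthAlg t) : Set Formula :=
  {α | ∀ v : ℕ → ℝ, IsValuation t T v → eval t v α = 1}

/-- Principle P1. -/
def P1 (L : Set Formula) : Prop :=
  ∀ (t : ContTNorm) (T : TruthAlg t), Taut t T = L →
    ∀ α β : Formula,
      (Formula.iff α β ∈ L ↔
        ∀ v : ℕ → ℝ, IsValuation t T v → (eval t v α = 1 ↔ eval t v β = 1))

/-- Principle P2. -/
def P2 (L : Set Formula) : Prop :=
  ∀ (t : ContTNorm) (T : TruthAlg t), Taut t T = L →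
    ∀ v w : ℕ → ℝ, IsValuation t T v → IsValuation t T w → v ≠ w →
      ∃ α : Formula, 0 < eval t v α ∧ eval t w α = 0

/-- The Gödel t-norm: minimum. -/
def minT : ContTNorm where
  mul := fun x y => min x y
  maps_to := by
    rintro x ⟨hx0, hx1⟩ y ⟨hy0, hy1⟩
    exact ⟨le_min hx0 hy0, min_le_of_left_le hx1⟩
  continuousOn := (continuous_fst.min continuous_snd).continuousOn
  assoc := fun x _ y _ z _ => min_assoc x y z
  comm := fun x _ y _ => min_comm x y
  mono := fun a _ b _ c _ h => min_le_min le_rfl h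
  one_mul' := by rintro x ⟨hx0, hx1⟩; exact min_eq_right hx1

/-- The Łukasiewicz t-norm: `x ⊙ y = max 0 (x + y - 1)`. -/
def lukT : ContTNorm where
  mul := fun x y => max 0 (x + y - 1)
  maps_to := by
    rintro x ⟨hx0, hx1⟩ y ⟨hy0, hy1⟩
    exact ⟨le_max_left _ _, max_le zero_le_one (by linarith)⟩
  continuousOn :=
    (continuous_const.max ((continuous_fst.add continuous_snd).sub continuous_const)).continuousOn
  assoc := by
    rintro x ⟨hx0, hx1⟩ y ⟨hy0, hy1⟩ z ⟨hz0, hz1⟩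
    simp only [max_def]
    split_ifs <;> linarith
  comm := by intro x _ y _; rw [add_comm]
  mono := by
    rintro a _ b _ c _ h
    exact max_le_max le_rfl (by linarith)
  one_mul' := by
    rintro x ⟨hx0, hx1⟩
    rw [show (1:ℝ) + x - 1 = x by ring, max_eq_right hx0]

/-- The product t-norm: ordinary multiplication. -/
def prodT : ContTNorm where
  mul := fun x y => x * y
  maps_to := by
    rintro x ⟨hx0, hx1⟩ y ⟨hy0, hy1⟩
    exact ⟨mul_nonneg hx0 hy0, by nlinarith⟩
  continuousOn := (continuous_fst.mul continuous_snd).continuousOn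
  assoc := fun x _ y _ z _ => mul_assoc x y z
  comm := fun x _ y _ => mul_comm x y
  mono := by rintro a ⟨ha0, _⟩ b _ c _ h; exact mul_le_mul_of_nonneg_left h ha0
  one_mul' := fun x _ => one_mul x

lemma ContTNorm.mul_zero' (t : ContTNorm) {x : ℝ} (hx : x ∈ I01) : t.mul x 0 = 0 := by
  have h01 : (0:ℝ) ∈ I01 := ⟨le_rfl, zero_le_one⟩
  have h11 : (1:ℝ) ∈ I01 := ⟨zero_le_one, le_rfl⟩
  have h1 : t.mul x 0 = t.mul 0 x := t.comm x hx 0 h01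
  have h2 : t.mul 0 x ≤ t.mul 0 1 := t.mono 0 h01 x hx 1 h11 hx.2
  have h3 : t.mul 0 1 = t.mul 1 0 := t.comm 0 h01 1 h11
  have h4 : t.mul 1 0 = 0 := t.one_mul' 0 h01
  have h5 : t.mul x 0 ∈ I01 := t.maps_to x hx 0 h01
  rw [h3, h4] at h2
  rw [h1] at h5 ⊢
  exact le_antisymm h2 h5.1

lemma resid_mem_I01 (t : ContTNorm) {x y : ℝ} (hx : x ∈ I01) (hy : y ∈ I01) :
    resid t x y ∈ I01 := by
  have h01 : (0:ℝ) ∈ I01 := ⟨le_rfl, zero_le_one⟩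
  have h0 : (0:ℝ) ∈ {c | c ∈ I01 ∧ t.mul x c ≤ y} :=
    ⟨h01, by rw [t.mul_zero' hx]; exact hy.1⟩
  have hbdd : BddAbove {c | c ∈ I01 ∧ t.mul x c ≤ y} := ⟨1, fun c hc => hc.1.2⟩
  constructor
  · exact le_csSup hbdd h0
  · exact csSup_le ⟨0, h0⟩ fun c hc => hc.1.2

/-- The full algebra of truth values `[0,1]` for a t-norm `t`. -/
def fullAlg (t : ContTNorm) : TruthAlg t where
  carrier := I01
  subset := le_rfl
  zero_mem := ⟨le_rfl, zero_le_one⟩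
  one_mem := ⟨zero_le_one, le_rfl⟩
  mul_mem := t.maps_to
  resid_mem := fun _ hx _ hy => resid_mem_I01 t hx hy

lemma resid_eq_one_of_le (t : ContTNorm) {x y : ℝ} (hx : x ∈ I01) (hy : y ∈ I01)
    (hxy : x ≤ y) : resid t x y = 1 := by
  have h11 : (1:ℝ) ∈ I01 := ⟨zero_le_one, le_rfl⟩
  have hmul : t.mul x 1 = x := by rw [t.comm x hx 1 h11]; exact t.one_mul' x hx
  have h1 : (1:ℝ) ∈ {c | c ∈ I01 ∧ t.mul x c ≤ y} := ⟨h11, by rw [hmul]; exact hxy⟩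
  have hbdd : BddAbove {c | c ∈ I01 ∧ t.mul x c ≤ y} := ⟨1, fun c hc => hc.1.2⟩
  exact le_antisymm (csSup_le ⟨1, h1⟩ fun c hc => hc.1.2) (le_csSup hbdd h1)

lemma resid_one_zero (t : ContTNorm) : resid t 1 0 = 0 := by
  have : {c | c ∈ I01 ∧ t.mul 1 c ≤ 0} = {0} := by
    ext c
    constructor
    · rintro ⟨hc, hle⟩
      have := t.one_mul' c hc
      have := hc.1
      simp only [Set.mem_singleton_iff]
      linarith [this, (t.one_mul' c hc) ▸ hle]
    · rintro rfl
      exact ⟨⟨le_rfl, zero_le_one⟩, by rw [t.mul_zero' ⟨zero_le_one, le_rfl⟩]⟩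
  rw [resid, this, csSup_singleton]

/-- The two-element algebra of truth values `{0,1}`. -/
def boolAlg (t : ContTNorm) : TruthAlg t where
  carrier := {0, 1}
  subset := by
    rintro x (rfl | rfl)
    · exact ⟨le_rfl, zero_le_one⟩
    · exact ⟨zero_le_one, le_rfl⟩
  zero_mem := Or.inl rfl
  one_mem := Or.inr rfl
  mul_mem := by
    have h01 : (0:ℝ) ∈ I01 := ⟨le_rfl, zero_le_one⟩
    have h11 : (1:ℝ) ∈ I01 := ⟨zero_le_one, le_rfl⟩
    rintro x (rfl | rfl) y (rfl | rfl)
    · exact Or.inl (t.mul_zero' h01)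
    · exact Or.inl (by rw [t.comm 0 h01 1 h11]; exact t.mul_zero' h11)
    · exact Or.inl (t.mul_zero' h11)
    · exact Or.inr (t.one_mul' 1 h11)
  resid_mem := by
    have h01 : (0:ℝ) ∈ I01 := ⟨le_rfl, zero_le_one⟩
    have h11 : (1:ℝ) ∈ I01 := ⟨zero_le_one, le_rfl⟩
    rintro x (rfl | rfl) y (rfl | rfl)
    · exact Or.inr (resid_eq_one_of_le t h01 h01 le_rfl)
    · exact Or.inr (resid_eq_one_of_le t h01 h11 zero_le_one)
    · exact Or.inl (resid_one_zero t)
    · exact Or.inr (resid_eq_one_of_le t h11 h11 le_rfl)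

/-- Classical logic: the logic induced by the two-element algebra `{0,1}`
(this is independent of the chosen continuous t-norm). -/
def ClassicalLogic : Set Formula := Taut minT (boolAlg minT)


/-! ### Basic lemmas about continuous t-norms -/

section Basics
variable {t : ContTNorm} {x y z c : ℝ}

lemma I01_zero : (0:ℝ) ∈ I01 := ⟨le_rfl, zero_le_one⟩
lemma I01_one : (1:ℝ) ∈ I01 := ⟨zero_le_one, le_rfl⟩

lemma mul_mem' (hx : x ∈ I01) (hy : y ∈ I01) : t.mul x y ∈ I01 := t.maps_to x hx y hy

lemma tmul_comm' (hx : x ∈ I01) (hy : y ∈ I01) : t.mul x y = t.mul y x := t.comm x hx y hy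

lemma mul_assoc' (hx : x ∈ I01) (hy : y ∈ I01) (hz : z ∈ I01) :
    t.mul (t.mul x y) z = t.mul x (t.mul y z) := t.assoc x hx y hy z hz

lemma one_mul'' (hx : x ∈ I01) : t.mul 1 x = x := t.one_mul' x hx

lemma mul_x_one (hx : x ∈ I01) : t.mul x 1 = x := by
  rw [tmul_comm' hx I01_one, one_mul'' hx]

lemma mul_mono_r (hx : x ∈ I01) (hy : y ∈ I01) (hz : z ∈ I01) (h : y ≤ z) :
    t.mul x y ≤ t.mul x z := t.mono x hx y hy z hz h

lemma mul_mono_l (hx : x ∈ I01) (hy : y ∈ I01) (hz : z ∈ I01) (h : x ≤ z) :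
    t.mul x y ≤ t.mul z y := by
  rw [tmul_comm' hx hy, tmul_comm' hz hy]; exact mul_mono_r hy hx hz h

lemma mul_mono' {x' y' : ℝ} (hx : x ∈ I01) (hy : y ∈ I01) (hx' : x' ∈ I01) (hy' : y' ∈ I01)
    (h1 : x ≤ x') (h2 : y ≤ y') : t.mul x y ≤ t.mul x' y' :=
  (mul_mono_l hx hy hx' h1).trans (mul_mono_r hx' hy hy' h2)

lemma mul_le_left (hx : x ∈ I01) (hy : y ∈ I01) : t.mul x y ≤ x :=
  (mul_mono_r hx hy I01_one hy.2).trans_eq (mul_x_one hx)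

lemma mul_le_right (hx : x ∈ I01) (hy : y ∈ I01) : t.mul x y ≤ y := by
  rw [tmul_comm' hx hy]; exact mul_le_left hy hx

lemma mul_continuousOn_right (hx : x ∈ I01) : ContinuousOn (fun c => t.mul x c) I01 := by
  have h : (fun c => t.mul x c) = (fun p : ℝ × ℝ => t.mul p.1 p.2) ∘ (fun c => (x, c)) := rfl
  rw [h]
  exact t.continuousOn.comp ((continuous_const.prodMk continuous_id).continuousOn)
    (fun c hc => Set.mk_mem_prod hx hc)

lemma residSet_compact (hx : x ∈ I01) : IsCompact {c | c ∈ I01 ∧ t.mul x c ≤ y} := by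
  have hclosed : IsClosed {c | c ∈ I01 ∧ t.mul x c ≤ y} := by
    have h : {c | c ∈ I01 ∧ t.mul x c ≤ y} = I01 ∩ (fun c => t.mul x c) ⁻¹' (Set.Iic y) := rfl
    rw [h]
    exact (mul_continuousOn_right hx).preimage_isClosed_of_isClosed isClosed_Icc isClosed_Iic
  exact isCompact_Icc.of_isClosed_subset hclosed (fun c hc => hc.1)

lemma mul_resid_le (hx : x ∈ I01) (hy : y ∈ I01) : t.mul x (resid t x y) ≤ y := by
  have hne : {c | c ∈ I01 ∧ t.mul x c ≤ y}.Nonempty :=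
    ⟨0, I01_zero, by rw [t.mul_zero' hx]; exact hy.1⟩
  exact ((residSet_compact hx).sSup_mem hne).2

lemma le_resid (hc : c ∈ I01) (h : t.mul x c ≤ y) : c ≤ resid t x y :=
  le_csSup ⟨1, fun z hz => hz.1.2⟩ ⟨hc, h⟩

lemma mul_le_of_le_resid (hx : x ∈ I01) (hy : y ∈ I01) (hc : c ∈ I01)
    (h : c ≤ resid t x y) : t.mul x c ≤ y :=
  (mul_mono_r hx hc (resid_mem_I01 t hx hy) h).trans (mul_resid_le hx hy)

lemma mul_resid (hx : x ∈ I01) (hy : y ∈ I01) : t.mul x (resid t x y) = min x y := by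
  rcases le_total x y with h | h
  · rw [resid_eq_one_of_le t hx hy h, mul_x_one hx, min_eq_left h]
  · rw [min_eq_right h]
    refine le_antisymm (mul_resid_le hx hy) ?_
    obtain ⟨c, hcI, hc⟩ : ∃ c ∈ Set.Icc (0:ℝ) 1, t.mul x c = y := by
      have hivt := intermediate_value_Icc (zero_le_one (α := ℝ)) (mul_continuousOn_right (t := t) hx)
      have hmem : y ∈ Set.Icc (t.mul x 0) (t.mul x 1) := by
        rw [t.mul_zero' hx, mul_x_one hx]; exact ⟨hy.1, h⟩
      obtain ⟨c, hcI, hc⟩ := hivt hmem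
      exact ⟨c, hcI, hc⟩
    calc y = t.mul x c := hc.symm
      _ ≤ t.mul x (resid t x y) :=
        mul_mono_r hx hcI (resid_mem_I01 t hx hy) (le_resid hcI (le_of_eq hc))

lemma resid_anti1 {x' : ℝ} (hx : x ∈ I01) (hx' : x' ∈ I01) (hy : y ∈ I01) (h : x ≤ x') :
    resid t x' y ≤ resid t x y :=
  le_resid (resid_mem_I01 t hx' hy)
    ((mul_mono_l hx (resid_mem_I01 t hx' hy) hx' h).trans (mul_resid_le hx' hy))

lemma resid_mono2 {y' : ℝ} (hx : x ∈ I01) (hy : y ∈ I01) (hy' : y' ∈ I01) (h : y ≤ y') :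
    resid t x y ≤ resid t x y' :=
  le_resid (resid_mem_I01 t hx hy) ((mul_resid_le hx hy).trans h)

lemma resid_curry (hx : x ∈ I01) (hy : y ∈ I01) (hz : z ∈ I01) :
    resid t (t.mul x y) z = resid t x (resid t y z) := by
  have hxy := mul_mem' (t := t) hx hy
  have h1 : resid t (t.mul x y) z ∈ I01 := resid_mem_I01 t hxy hz
  have h2 : resid t x (resid t y z) ∈ I01 := resid_mem_I01 t hx (resid_mem_I01 t hy hz)
  refine le_antisymm (le_resid h1 (le_resid (mul_mem' hx h1) ?_)) (le_resid h2 ?_)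
  · -- y * (x * c) ≤ z where c := resid (x*y) z
    have hs : t.mul (t.mul x y) (resid t (t.mul x y) z) ≤ z := mul_resid_le hxy hz
    calc t.mul y (t.mul x (resid t (t.mul x y) z))
        = t.mul (t.mul x y) (resid t (t.mul x y) z) := by
          rw [← mul_assoc' hy hx h1, tmul_comm' hy hx]
      _ ≤ z := hs
  · -- (x*y) * c' ≤ z where c' := resid x (resid y z)
    have hxc : t.mul x (resid t x (resid t y z)) ≤ resid t y z :=
      mul_resid_le hx (resid_mem_I01 t hy hz)
    calc t.mul (t.mul x y) (resid t x (resid t y z))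
        = t.mul y (t.mul x (resid t x (resid t y z))) := by
          rw [← mul_assoc' hy hx h2, tmul_comm' hy hx]
      _ ≤ t.mul y (resid t y z) :=
          mul_mono_r hy (mul_mem' hx h2) (resid_mem_I01 t hy hz) hxc
      _ ≤ z := mul_resid_le hy hz

/-! ### Negation -/

lemma mul_N_self (hx : x ∈ I01) : t.mul x (resid t x 0) = 0 := by
  have := mul_resid (t := t) hx I01_zero
  rwa [min_eq_right hx.1] at this

lemma le_NN (hx : x ∈ I01) : x ≤ resid t (resid t x 0) 0 := by
  refine le_resid hx ?_
  rw [tmul_comm' (resid_mem_I01 t hx I01_zero) hx]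
  exact le_of_eq (mul_N_self hx)

lemma N_zero : resid t 0 0 = 1 := resid_eq_one_of_le t I01_zero I01_zero le_rfl

lemma N_anti (hx : x ∈ I01) (hy : y ∈ I01) (h : x ≤ y) : resid t y 0 ≤ resid t x 0 :=
  resid_anti1 hx hy I01_zero h

lemma NNN (hx : x ∈ I01) : resid t (resid t (resid t x 0) 0) 0 = resid t x 0 := by
  have hN := resid_mem_I01 t hx I01_zero
  have hNN := resid_mem_I01 t hN I01_zero
  exact le_antisymm (N_anti hx hNN (le_NN hx)) (le_NN hN)

lemma resid_le_of_eq_one (hx : x ∈ I01) (hy : y ∈ I01) (h : resid t x y = 1) : x ≤ y := by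
  have := mul_resid (t := t) hx hy
  rw [h, mul_x_one hx] at this
  exact min_eq_left_iff.mp this.symm

lemma tmul_eq_one (hx : x ∈ I01) (hy : y ∈ I01) (h : t.mul x y = 1) : x = 1 ∧ y = 1 :=
  ⟨le_antisymm hx.2 (h ▸ mul_le_left hx hy), le_antisymm hy.2 (h ▸ mul_le_right hx hy)⟩

lemma le_N_of_mul_eq_zero (hx : x ∈ I01) (hy : y ∈ I01) (h : t.mul x y = 0) :
    y ≤ resid t x 0 := le_resid hy (le_of_eq h)

lemma mul_eq_zero_of_le_N (hx : x ∈ I01) (hy : y ∈ I01) (h : y ≤ resid t x 0) :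
    t.mul x y = 0 :=
  le_antisymm (mul_le_of_le_resid hx I01_zero hy h) (mul_mem' hx hy).1

lemma resid_one_right (hy : y ∈ I01) : resid t 1 y = y := by
  refine le_antisymm ?_ (le_resid hy (le_of_eq (one_mul'' hy)))
  have h := mul_resid_le (t := t) I01_one hy
  rwa [one_mul'' (resid_mem_I01 t I01_one hy)] at h

end Basics

/-! ### Powers, idempotents, archimedean property, involutivity -/

def pw (t : ContTNorm) (x : ℝ) : ℕ → ℝ
  | 0 => 1
  | n+1 => t.mul (pw t x n) x

section Pow
variable {t : ContTNorm} {x y z c : ℝ}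

lemma pw_mem (hx : x ∈ I01) : ∀ n, pw t x n ∈ I01
  | 0 => I01_one
  | n+1 => mul_mem' (pw_mem hx n) hx

lemma pw_one_exp (hx : x ∈ I01) : pw t x 1 = x := by
  show t.mul 1 x = x; exact one_mul'' hx

lemma pw_succ_le (hx : x ∈ I01) (n : ℕ) : pw t x (n+1) ≤ pw t x n :=
  mul_le_left (pw_mem hx n) hx

lemma pw_anti (hx : x ∈ I01) : Antitone (pw t x) :=
  antitone_nat_of_succ_le (pw_succ_le hx)

lemma pw_add (hx : x ∈ I01) (m : ℕ) : ∀ n, pw t x (m + n) = t.mul (pw t x m) (pw t x n)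
  | 0 => by simp [pw, mul_x_one (pw_mem hx m)]
  | n+1 => by
      show pw t x (m + n + 1) = t.mul (pw t x m) (t.mul (pw t x n) x)
      rw [← mul_assoc' (pw_mem hx m) (pw_mem hx n) hx]
      show t.mul (pw t x (m+n)) x = _
      rw [pw_add hx m n]

lemma pw_base_one : ∀ n, pw t 1 n = 1
  | 0 => rfl
  | n+1 => by show t.mul (pw t 1 n) 1 = 1; rw [mul_x_one (pw_mem I01_one n), pw_base_one n]

lemma pw_sq (hx : x ∈ I01) : ∀ n, pw t (t.mul x x) n = pw t x (2*n)
  | 0 => rfl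
  | n+1 => by
      have hxx := mul_mem' (t := t) hx hx
      show t.mul (pw t (t.mul x x) n) (t.mul x x) = _
      have h2 : pw t x 2 = t.mul x x := by
        show t.mul (pw t x 1) x = _
        rw [pw_one_exp hx]
      rw [pw_sq hx n, ← h2, ← pw_add hx (2*n) 2, show 2*n+2 = 2*(n+1) by omega]

lemma pw_limit (hx : x ∈ I01) : ∃ c, c ∈ I01 ∧
    Filter.Tendsto (pw t x) Filter.atTop (nhds c) ∧ t.mul c c = c ∧ ∀ n, c ≤ pw t x n := by
  have hbdd : BddBelow (Set.range (pw t x)) := ⟨0, by rintro _ ⟨n, rfl⟩; exact (pw_mem hx n).1⟩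
  refine ⟨⨅ n, pw t x n, ⟨?_, ?_⟩, tendsto_atTop_ciInf (pw_anti hx) hbdd, ?_, fun n => ciInf_le hbdd n⟩
  · exact le_ciInf fun n => (pw_mem hx n).1
  · exact (ciInf_le hbdd 0).trans (pw_mem hx 0).2
  · -- idempotency via continuity
    set c := ⨅ n, pw t x n with hc
    have htend := tendsto_atTop_ciInf (pw_anti hx) hbdd
    have hcI : c ∈ I01 := ⟨le_ciInf fun n => (pw_mem hx n).1, (ciInf_le hbdd 0).trans (pw_mem hx 0).2⟩
    have hpair : Filter.Tendsto (fun n => ((pw t x n, pw t x n) : ℝ × ℝ)) Filter.atTop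
        (nhdsWithin (c, c) (I01 ×ˢ I01)) := by
      rw [tendsto_nhdsWithin_iff]
      exact ⟨htend.prodMk_nhds htend,
        Filter.Eventually.of_forall fun n => Set.mk_mem_prod (pw_mem hx n) (pw_mem hx n)⟩
    have hcont := (t.continuousOn (c, c) (Set.mk_mem_prod hcI hcI)).tendsto.comp hpair
    have heq : (fun n => t.mul (pw t x n) (pw t x n)) = fun n => pw t x (n + n) := by
      funext n; rw [pw_add hx n n]
    have h2 : Filter.Tendsto (fun n => pw t x (n + n)) Filter.atTop (nhds c) :=
      htend.comp (Filter.tendsto_atTop_mono (fun n => Nat.le_add_left n n) Filter.tendsto_id)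
    have := hcont
    rw [show ((fun p : ℝ × ℝ => t.mul p.1 p.2) ∘ fun n => (pw t x n, pw t x n))
        = fun n => t.mul (pw t x n) (pw t x n) from rfl, heq] at this
    exact tendsto_nhds_unique this h2

lemma idem_mul (hc : c ∈ I01) (hcc : t.mul c c = c) (hz : z ∈ I01) (hzc : z ≤ c) :
    t.mul c z = z := by
  obtain ⟨u, huI, hu⟩ : ∃ u ∈ Set.Icc (0:ℝ) 1, t.mul c u = z := by
    have hivt := intermediate_value_Icc (zero_le_one (α := ℝ)) (mul_continuousOn_right (t := t) hc)
    have hmem : z ∈ Set.Icc (t.mul c 0) (t.mul c 1) := by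
      rw [t.mul_zero' hc, mul_x_one hc]; exact ⟨hz.1, hzc⟩
    obtain ⟨u, huI, hu⟩ := hivt hmem
    exact ⟨u, huI, hu⟩
  calc t.mul c z = t.mul c (t.mul c u) := by rw [hu]
    _ = t.mul (t.mul c c) u := (mul_assoc' hc hc huI).symm
    _ = t.mul c u := by rw [hcc]
    _ = z := hu

lemma N_idem (hc : c ∈ I01) (hcc : t.mul c c = c) (hc0 : 0 < c) : resid t c 0 = 0 := by
  refine le_antisymm ?_ (resid_mem_I01 t hc I01_zero).1
  refine csSup_le ⟨0, I01_zero, by rw [t.mul_zero' hc]⟩ ?_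
  rintro w ⟨hwI, hw0⟩
  rcases le_total w c with h | h
  · rw [idem_mul hc hcc hwI h] at hw0; exact hw0
  · exfalso
    have h2 : t.mul c c ≤ t.mul c w := mul_mono_r hc hc hwI h
    rw [hcc] at h2
    have := h2
    linarith [this.trans hw0]

lemma arch (hx : x ∈ I01) (hx0 : 0 < x) (hN : 0 < resid t x 0) : ∃ n, pw t x n = 0 := by
  set m := resid t x 0 with hm
  have hmI : m ∈ I01 := resid_mem_I01 t hx I01_zero
  set r := min x m with hr
  have hrI : r ∈ I01 := ⟨le_min hx.1 hmI.1, (min_le_left _ _).trans hx.2⟩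
  have hr0 : 0 < r := lt_min hx0 hN
  have hrr : t.mul r r = 0 := by
    refine le_antisymm ?_ (mul_mem' hrI hrI).1
    calc t.mul r r ≤ t.mul x m := mul_mono' hrI hrI hx hmI (min_le_left _ _) (min_le_right _ _)
      _ = 0 := mul_N_self hx
  obtain ⟨cc, hccI, htend, hidem, hle⟩ := pw_limit (t := t) hx
  rcases eq_or_lt_of_le hccI.1 with hcc0 | hcc0
  · -- inf is 0: some power dips below r
    have hev : ∀ᶠ n in Filter.atTop, pw t x n < r :=
      htend.eventually_lt_const (hcc0 ▸ hr0)
    obtain ⟨n, hn⟩ := hev.exists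
    refine ⟨n + n, le_antisymm ?_ (pw_mem hx (n+n)).1⟩
    calc pw t x (n+n) = t.mul (pw t x n) (pw t x n) := pw_add hx n n
      _ ≤ t.mul r r := mul_mono' (pw_mem hx n) (pw_mem hx n) hrI hrI hn.le hn.le
      _ = 0 := hrr
  · -- inf positive: contradiction with hN
    exfalso
    have hNc : resid t cc 0 = 0 := N_idem hccI hidem hcc0
    have hxc : cc ≤ x := (hle 1).trans_eq (pw_one_exp hx)
    have h3 : resid t x 0 ≤ resid t cc 0 := N_anti (t := t) hccI hx hxc
    rw [hNc] at h3
    rw [← hm] at h3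
    linarith
end Pow

section Inv
variable {t : ContTNorm} {x y z c : ℝ}

/-- Key structural lemma: double negation is the identity on the zero-divisor region,
for any continuous t-norm. -/
lemma NN_eq (hx : x ∈ I01) (hN : 0 < resid t x 0) : resid t (resid t x 0) 0 = x := by
  set m := resid t x 0 with hm
  have hmI : m ∈ I01 := resid_mem_I01 t hx I01_zero
  set y := resid t m 0 with hy
  have hyI : y ∈ I01 := resid_mem_I01 t hmI I01_zero
  have hxy : x ≤ y := le_NN hx
  rcases eq_or_lt_of_le hxy with heq | hlt
  · exact heq.symm
  exfalso
  have hx0 : 0 < x := by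
    rcases eq_or_lt_of_le hx.1 with h0 | h0
    · exfalso
      have hm1 : m = 1 := by rw [hm, ← h0, N_zero]
      have hy0 : y = 0 := by rw [hy, hm1, resid_one_zero]
      rw [hy0, ← h0] at hlt
      exact lt_irrefl 0 hlt
    · exact h0
  have hNy : resid t y 0 = m := by rw [hy, hm]; exact NNN hx
  set s := resid t y x with hs
  have hsI : s ∈ I01 := resid_mem_I01 t hyI hx
  have hys : t.mul y s = x := by
    rw [hs, mul_resid hyI hx, min_eq_right hlt.le]
  rcases le_total s m with hsm | hms
  · -- x = y*s ≤ y*m = 0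
    have : t.mul y s ≤ t.mul y m := mul_mono_r hyI hsI hmI hsm
    rw [hys] at this
    have h0 : t.mul y m = 0 := by rw [← hNy]; exact mul_N_self hyI
    rw [h0] at this
    linarith
  · -- m ≤ s
    have hresm : resid t s m = m := by
      refine le_antisymm ?_ (le_resid hmI (mul_le_right hsI hmI))
      have h1 : t.mul x (resid t s m) = 0 := by
        have hrI : resid t s m ∈ I01 := resid_mem_I01 t hsI hmI
        calc t.mul x (resid t s m) = t.mul (t.mul y s) (resid t s m) := by rw [hys]
          _ = t.mul y (t.mul s (resid t s m)) := mul_assoc' hyI hsI hrI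
          _ = t.mul y (min s m) := by rw [mul_resid hsI hmI]
          _ = t.mul y m := by rw [min_eq_right hms]
          _ = 0 := by rw [← hNy]; exact mul_N_self hyI
      rw [hm]
      exact le_resid (resid_mem_I01 t hsI hmI) (le_of_eq h1)
    have hsmul : t.mul s m = m := by
      have := mul_resid (t := t) hsI hmI
      rw [hresm, min_eq_right hms] at this
      exact this
    have hpow : ∀ n, t.mul (pw t s n) m = m := by
      intro n; induction n with
      | zero => exact one_mul'' hmI
      | succ n ih =>
        show t.mul (t.mul (pw t s n) s) m = m
        rw [mul_assoc' (pw_mem hsI n) hsI hmI, hsmul, ih]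
    obtain ⟨cc, hccI, htend, hidem, hle⟩ := pw_limit (t := t) hsI
    have hcm : t.mul cc m = m := by
      have hpair : Filter.Tendsto (fun n => ((pw t s n, m) : ℝ × ℝ)) Filter.atTop
          (nhdsWithin (cc, m) (I01 ×ˢ I01)) := by
        rw [tendsto_nhdsWithin_iff]
        exact ⟨htend.prodMk_nhds tendsto_const_nhds,
          Filter.Eventually.of_forall fun n => Set.mk_mem_prod (pw_mem hsI n) hmI⟩
      have hcont := (t.continuousOn (cc, m) (Set.mk_mem_prod hccI hmI)).tendsto.comp hpair
      have heq : ((fun p : ℝ × ℝ => t.mul p.1 p.2) ∘ fun n => (pw t s n, m))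
          = fun n => t.mul (pw t s n) m := rfl
      rw [heq] at hcont
      have hconst : Filter.Tendsto (fun n : ℕ => t.mul (pw t s n) m) Filter.atTop (nhds m) := by
        simp only [hpow]; exact tendsto_const_nhds
      exact tendsto_nhds_unique hcont hconst
    have hcc0 : 0 < cc := by
      rcases eq_or_lt_of_le hccI.1 with h0 | h0
      · exfalso
        rw [← h0] at hcm
        rw [tmul_comm' I01_zero hmI, t.mul_zero' hmI] at hcm
        rw [← hcm] at hN
        exact lt_irrefl 0 hN
      · exact h0
    have hNcc : resid t cc 0 = 0 := N_idem hccI hidem hcc0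
    have hyc : y ≤ cc := by
      by_contra hyc
      push_neg at hyc
      have : resid t cc 0 ≥ m := by
        rw [← hNy]; exact N_anti hccI hyI hyc.le
      rw [hNcc] at this
      linarith
    have hscc : cc ≤ s := (hle 1).trans_eq (pw_one_exp hsI)
    have : y ≤ t.mul y s := by
      calc y = t.mul cc y := (idem_mul hccI hidem hyI hyc).symm
        _ = t.mul y cc := tmul_comm' hccI hyI
        _ ≤ t.mul y s := mul_mono_r hyI hccI hsI hscc
    rw [hys] at this
    linarith
end Inv

/-! ### Evaluation lemmas -/

lemma eval_mem_I01 (t : ContTNorm) (v : ℕ → ℝ) (hv : ∀ i, v i ∈ I01) :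
    ∀ α : Formula, eval t v α ∈ I01 := by
  intro α
  induction α with
  | var i => exact hv i
  | bot => exact I01_zero
  | conj a b iha ihb => exact mul_mem' iha ihb
  | impl a b iha ihb => exact resid_mem_I01 t iha ihb

lemma eval_mem_carrier (t : ContTNorm) (T : TruthAlg t) (v : ℕ → ℝ) (hv : IsValuation t T v) :
    ∀ α : Formula, eval t v α ∈ T.carrier := by
  intro α
  induction α with
  | var i => exact hv i
  | bot => exact T.zero_mem
  | conj a b iha ihb => exact T.mul_mem _ iha _ ihb
  | impl a b iha ihb => exact T.resid_mem _ iha _ ihb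

/-- Substitute a formula for all variables. -/
def subst : Formula → Formula → Formula
  | .var _, β => β
  | .bot, _ => .bot
  | .conj a b, β => .conj (subst a β) (subst b β)
  | .impl a b, β => .impl (subst a β) (subst b β)

lemma eval_subst (t : ContTNorm) (v : ℕ → ℝ) (F β : Formula) :
    eval t v (subst F β) = eval t (fun _ => eval t v β) F := by
  induction F with
  | var i => rfl
  | bot => rfl
  | conj a b iha ihb => show t.mul _ _ = _; rw [iha, ihb]; rfl
  | impl a b iha ihb => show resid t _ _ = _; rw [iha, ihb]; rfl

/-- Formula computing the `n`-th power of the variable. -/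
def powFormula : ℕ → Formula
  | 0 => .impl .bot .bot
  | n+1 => .conj (powFormula n) (.var 0)

lemma eval_powFormula (t : ContTNorm) (x : ℝ) (n : ℕ) :
    eval t (fun _ => x) (powFormula n) = pw t x n := by
  induction n with
  | zero => show resid t 0 0 = 1; exact N_zero
  | succ n ih => show t.mul (eval t (fun _ => x) (powFormula n)) x = _; rw [ih]; rfl

/-- The sigma formula `¬(¬X ⊙ ¬X)`. -/
def sigmaFormula : Formula :=
  .impl (.conj (.impl (.var 0) .bot) (.impl (.var 0) .bot)) .bot

lemma eval_sigmaFormula (t : ContTNorm) (x : ℝ) :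
    eval t (fun _ => x) sigmaFormula
      = resid t (t.mul (resid t x 0) (resid t x 0)) 0 := rfl

/-! ### The collapse homomorphism (non-involutive case) -/

section Collapse
variable {t : ContTNorm} {x y z u c : ℝ}

/-- The collapse map: identity on the zero-divisor region, `1` elsewhere. -/
def clps (t : ContTNorm) (x : ℝ) : ℝ := if 0 < resid t x 0 then x else 1

lemma clps_zero : clps t 0 = 0 := by
  unfold clps
  rw [N_zero]
  simp

lemma clps_mem (hx : x ∈ I01) : clps t x ∈ I01 := by
  unfold clps; split <;> [exact hx; exact I01_one]

lemma clps_eq_zero (hx : x ∈ I01) (h : clps t x = 0) : x = 0 := by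
  unfold clps at h; split at h
  · exact h
  · norm_num at h

-- x in U (no zero divisor), y in U implies x*y in U
lemma U_mul (hx : x ∈ I01) (hy : y ∈ I01) (hNx : resid t x 0 = 0) (hNy : resid t y 0 = 0) :
    resid t (t.mul x y) 0 = 0 := by
  have hxyI := mul_mem' (t := t) hx hy
  have hNI := resid_mem_I01 t hxyI I01_zero
  refine le_antisymm ?_ hNI.1
  have h1 : t.mul (t.mul x y) (resid t (t.mul x y) 0) = 0 := mul_N_self hxyI
  rw [mul_assoc' hx hy hNI] at h1
  have h2 : t.mul y (resid t (t.mul x y) 0) ≤ resid t x 0 :=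
    le_N_of_mul_eq_zero hx (mul_mem' hy hNI) h1
  rw [hNx] at h2
  have h3 : t.mul y (resid t (t.mul x y) 0) = 0 := le_antisymm h2 (mul_mem' hy hNI).1
  have h4 := le_N_of_mul_eq_zero hy hNI h3
  rwa [hNy] at h4

lemma U_up (hx : x ∈ I01) (hy : y ∈ I01) (hNx : resid t x 0 = 0) (h : x ≤ y) :
    resid t y 0 = 0 := by
  have h2 : resid t y 0 ≤ resid t x 0 := N_anti (t := t) hx hy h
  rw [hNx] at h2
  exact le_antisymm h2 (resid_mem_I01 t hy I01_zero).1

lemma Z_lt_U (hz : z ∈ I01) (hu : u ∈ I01) (hNz : 0 < resid t z 0) (hNu : resid t u 0 = 0) :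
    z < u := by
  rcases le_total u z with h | h
  · exfalso
    have h2 : resid t z 0 ≤ resid t u 0 := N_anti (t := t) hu hz h
    rw [hNu] at h2
    linarith
  · rcases eq_or_lt_of_le h with h1 | h1
    · exfalso; rw [h1] at hNz; rw [hNu] at hNz; exact lt_irrefl 0 hNz
    · exact h1

-- H2 : an element of U acts as unit on Z
lemma Z_mul_U (hz : z ∈ I01) (hu : u ∈ I01) (hNz : 0 < resid t z 0) (hNu : resid t u 0 = 0) :
    t.mul z u = z := by
  rcases eq_or_lt_of_le hz.1 with h0 | h0
  · rw [← h0, tmul_comm' I01_zero hu, t.mul_zero' hu]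
  refine le_antisymm (mul_le_left hz hu) ?_
  have hpowU : ∀ n, 0 < n → resid t (pw t u n) 0 = 0 := by
    intro n hn
    induction n with
    | zero => omega
    | succ n ih =>
      rcases Nat.eq_zero_or_pos n with h | h
      · subst h
        show resid t (t.mul 1 u) 0 = 0
        rw [one_mul'' hu]; exact hNu
      · show resid t (t.mul (pw t u n) u) 0 = 0
        exact U_mul (pw_mem hu n) hu (ih h) hNu
  obtain ⟨cc, hccI, htend, hidem, hle⟩ := pw_limit (t := t) hu
  have hzc : z ≤ cc := by
    have : ∀ n, z ≤ pw t u (n+1) := fun n =>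
      (Z_lt_U hz (pw_mem hu (n+1)) hNz (hpowU (n+1) n.succ_pos)).le
    have h2 : Filter.Tendsto (fun n => pw t u (n+1)) Filter.atTop (nhds cc) :=
      htend.comp (Filter.tendsto_add_atTop_nat 1)
    exact le_of_tendsto_of_tendsto' tendsto_const_nhds h2 this
  have hcu : cc ≤ u := (hle 1).trans_eq (pw_one_exp hu)
  calc z = t.mul cc z := (idem_mul hccI hidem hz hzc).symm
    _ = t.mul z cc := tmul_comm' hccI hz
    _ ≤ t.mul z u := mul_mono_r hz hccI hu hcu

lemma clps_mul (hx : x ∈ I01) (hy : y ∈ I01) :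
    clps t (t.mul x y) = t.mul (clps t x) (clps t y) := by
  have hxyI := mul_mem' (t := t) hx hy
  by_cases hNx : 0 < resid t x 0 <;> by_cases hNy : 0 < resid t y 0
  · -- both in Z
    have hNxy : 0 < resid t (t.mul x y) 0 :=
      lt_of_lt_of_le hNx (N_anti hxyI hx (mul_le_left hx hy))
    unfold clps
    rw [if_pos hNx, if_pos hNy, if_pos hNxy]
  · -- x ∈ Z, y ∈ U
    have hNy' : resid t y 0 = 0 :=
      le_antisymm (not_lt.mp hNy) (resid_mem_I01 t hy I01_zero).1
    have hmul : t.mul x y = x := Z_mul_U hx hy hNx hNy'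
    unfold clps
    rw [hmul, if_pos hNx, if_neg hNy, mul_x_one hx]
  · -- x ∈ U, y ∈ Z
    have hNx' : resid t x 0 = 0 :=
      le_antisymm (not_lt.mp hNx) (resid_mem_I01 t hx I01_zero).1
    have hmul : t.mul x y = y := by
      rw [tmul_comm' hx hy]; exact Z_mul_U hy hx hNy hNx'
    unfold clps
    rw [hmul, if_pos hNy, if_neg hNx, one_mul'' hy]
  · -- both in U
    have hNx' : resid t x 0 = 0 :=
      le_antisymm (not_lt.mp hNx) (resid_mem_I01 t hx I01_zero).1
    have hNy' : resid t y 0 = 0 :=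
      le_antisymm (not_lt.mp hNy) (resid_mem_I01 t hy I01_zero).1
    have hNxy := U_mul hx hy hNx' hNy'
    unfold clps
    rw [if_neg hNx, if_neg hNy, if_neg (by rw [hNxy]; exact lt_irrefl 0), mul_x_one I01_one]

lemma clps_resid (hx : x ∈ I01) (hy : y ∈ I01) :
    clps t (resid t x y) = resid t (clps t x) (clps t y) := by
  have hrI := resid_mem_I01 t hx hy
  rcases le_total x y with hxy | hyx
  · -- x ≤ y : resid = 1
    have h1 : resid t x y = 1 := resid_eq_one_of_le t hx hy hxy
    have hc1 : clps t x ≤ clps t y := by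
      unfold clps
      by_cases hNx : 0 < resid t x 0 <;> by_cases hNy : 0 < resid t y 0
      · rw [if_pos hNx, if_pos hNy]; exact hxy
      · rw [if_pos hNx, if_neg hNy]; exact hx.2
      · exfalso
        have hNx' : resid t x 0 = 0 :=
          le_antisymm (not_lt.mp hNx) (resid_mem_I01 t hx I01_zero).1
        have := U_up hx hy hNx' hxy
        rw [this] at hNy; exact lt_irrefl 0 hNy
      · rw [if_neg hNx, if_neg hNy]
    rw [h1]
    have : clps t 1 = 1 := by
      unfold clps; rw [resid_one_zero]; simp
    rw [this, resid_eq_one_of_le t (clps_mem hx) (clps_mem hy) hc1]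
  · rcases eq_or_lt_of_le hyx with heq | hlt
    · -- x = y
      subst heq
      have h1 : resid t y y = 1 := resid_eq_one_of_le t hy hy le_rfl
      rw [h1]
      have hc : clps t 1 = 1 := by unfold clps; rw [resid_one_zero]; simp
      rw [hc, resid_eq_one_of_le t (clps_mem hy) (clps_mem hy) le_rfl]
    -- y < x
    by_cases hNx : 0 < resid t x 0 <;> by_cases hNy : 0 < resid t y 0
    · -- both Z : resid in Z
      have hmulr : t.mul x (resid t x y) = y := by
        rw [mul_resid hx hy, min_eq_right hyx]
      have hNr : 0 < resid t (resid t x y) 0 := by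
        by_contra hc
        have hNr' : resid t (resid t x y) 0 = 0 :=
          le_antisymm (not_lt.mp hc) (resid_mem_I01 t hrI I01_zero).1
        have := Z_mul_U hx hrI hNx hNr'
        rw [hmulr] at this
        exact absurd this hlt.ne
      unfold clps
      rw [if_pos hNx, if_pos hNy, if_pos hNr]
    · -- x ∈ Z, y ∈ U : impossible since y < x but Z < U
      exfalso
      have hNy' : resid t y 0 = 0 :=
        le_antisymm (not_lt.mp hNy) (resid_mem_I01 t hy I01_zero).1
      exact absurd (Z_lt_U hx hy hNx hNy') (not_lt.mpr hyx)
    · -- x ∈ U, y ∈ Z : resid = y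
      have hNx' : resid t x 0 = 0 :=
        le_antisymm (not_lt.mp hNx) (resid_mem_I01 t hx I01_zero).1
      have hry : resid t x y = y := by
        refine le_antisymm ?_ (le_resid hy (mul_le_right hx hy))
        have hmulr : t.mul x (resid t x y) = y := by
          rw [mul_resid hx hy, min_eq_right hyx]
        by_cases hNr : 0 < resid t (resid t x y) 0
        · -- r ∈ Z : x * r = r
          have := Z_mul_U hrI hx hNr hNx'
          rw [tmul_comm' hrI hx, hmulr] at this
          exact le_of_eq this.symm
        · -- r ∈ U : x*r ∈ U = y ∈ Z, contradiction
          exfalso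
          have hNr' : resid t (resid t x y) 0 = 0 :=
            le_antisymm (not_lt.mp hNr) (resid_mem_I01 t hrI I01_zero).1
          have := U_mul hx hrI hNx' hNr'
          rw [hmulr] at this
          rw [this] at hNy
          exact lt_irrefl 0 hNy
      unfold clps
      rw [hry, if_pos hNy, if_neg hNx, resid_one_right hy]
    · -- both U : resid ∈ U
      have hNy' : resid t y 0 = 0 :=
        le_antisymm (not_lt.mp hNy) (resid_mem_I01 t hy I01_zero).1
      have hyr : y ≤ resid t x y := le_resid hy (mul_le_right hx hy)
      have hNr : resid t (resid t x y) 0 = 0 := U_up hy hrI hNy' hyr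
      unfold clps
      rw [if_neg hNx, if_neg hNy, if_neg (by rw [hNr]; exact lt_irrefl 0),
        resid_eq_one_of_le t I01_one I01_one le_rfl]

lemma eval_clps (t : ContTNorm) (v : ℕ → ℝ) (hv : ∀ i, v i ∈ I01) (α : Formula) :
    eval t (fun i => clps t (v i)) α = clps t (eval t v α) := by
  induction α with
  | var i => rfl
  | bot => exact clps_zero.symm
  | conj a b iha ihb =>
    show t.mul _ _ = _
    rw [iha, ihb, ← clps_mul (eval_mem_I01 t v hv a) (eval_mem_I01 t v hv b)]; rfl
  | impl a b iha ihb =>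
    show resid t _ _ = _
    rw [iha, ihb, ← clps_resid (eval_mem_I01 t v hv a) (eval_mem_I01 t v hv b)]; rfl

end Collapse

/-! ### Łukasiewicz computations -/

section Luk
variable {x y : ℝ}

lemma resid_luk (hx : x ∈ I01) (hy : y ∈ I01) : resid lukT x y = min 1 (1 - x + y) := by
  have hset : {c | c ∈ I01 ∧ lukT.mul x c ≤ y} = Set.Icc 0 (min 1 (1 - x + y)) := by
    ext c
    constructor
    · rintro ⟨hcI, hc⟩
      have h2 : x + c - 1 ≤ y := le_trans (le_max_right _ _) hc
      exact ⟨hcI.1, le_min hcI.2 (by linarith)⟩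
    · rintro ⟨hc0, hc1⟩
      refine ⟨⟨hc0, (hc1.trans (min_le_left _ _))⟩, max_le hy.1 ?_⟩
      have := hc1.trans (min_le_right _ _)
      linarith
  show sSup _ = _
  rw [hset, csSup_Icc (le_min zero_le_one (by rcases hx with ⟨h1,h2⟩; rcases hy with ⟨h3,h4⟩; linarith))]

lemma mul_luk : lukT.mul x y = max 0 (x + y - 1) := rfl

/-- The formula `¬¬X → X`. -/
def nnimp : Formula := .impl (.impl (.impl (.var 0) .bot) .bot) (.var 0)

lemma nnimp_taut : nnimp ∈ Taut lukT (fullAlg lukT) := by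
  intro v hv
  have hx : v 0 ∈ I01 := hv 0
  show resid lukT (resid lukT (resid lukT (v 0) 0) 0) (v 0) = 1
  have h1 : resid lukT (v 0) 0 = 1 - v 0 := by
    rw [resid_luk hx I01_zero]
    rw [min_eq_right (by rcases hx with ⟨h1,h2⟩; linarith)]
    ring
  have h2 : (1 - v 0) ∈ I01 := ⟨by rcases hx with ⟨h1,h2⟩; linarith, by rcases hx with ⟨h1,h2⟩; linarith⟩
  rw [h1, resid_luk h2 I01_zero, min_eq_right (by rcases hx with ⟨h1,h2⟩; linarith)]
  rw [show (1 : ℝ) - (1 - v 0) + 0 = v 0 by ring, resid_luk hx hx]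
  rw [min_eq_left (by linarith)]

/-- If a logic contains `¬¬X → X` then its algebra of truth values is involutive. -/
lemma invol_of_nnimp {t : ContTNorm} {T : TruthAlg t} (h : nnimp ∈ Taut t T) :
    ∀ x ∈ T.carrier, resid t (resid t x 0) 0 = x := by
  intro x hxT
  have hx : x ∈ I01 := T.subset hxT
  have hval : IsValuation t T (fun _ => x) := fun _ => hxT
  have := h (fun _ => x) hval
  have heval : resid t (resid t (resid t x 0) 0) x = 1 := this
  have hNN : resid t (resid t x 0) 0 ∈ I01 :=
    resid_mem_I01 t (resid_mem_I01 t hx I01_zero) I01_zero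
  exact le_antisymm (resid_le_of_eq_one hNN hx heval) (le_NN hx)

/-- On `{0,1}`-valued valuations, every continuous t-norm agrees with Łukasiewicz. -/
lemma eval_bool (t : ContTNorm) (v : ℕ → ℝ) (hv : ∀ i, v i = 0 ∨ v i = 1) :
    ∀ α : Formula, eval t v α = eval lukT v α ∧ (eval t v α = 0 ∨ eval t v α = 1) := by
  intro α
  induction α with
  | var i => exact ⟨rfl, hv i⟩
  | bot => exact ⟨rfl, Or.inl rfl⟩
  | conj a b iha ihb =>
    obtain ⟨ha, ha01⟩ := iha
    obtain ⟨hb, hb01⟩ := ihb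
    constructor
    · show t.mul _ _ = lukT.mul _ _
      rw [← ha, ← hb]
      rcases ha01 with h1 | h1 <;> rcases hb01 with h2 | h2 <;> rw [h1, h2]
      · rw [t.mul_zero' I01_zero, mul_luk]; norm_num
      · rw [tmul_comm' I01_zero I01_one, t.mul_zero' I01_one, mul_luk]; norm_num
      · rw [t.mul_zero' I01_one, mul_luk]; norm_num
      · rw [mul_x_one I01_one, mul_luk]; norm_num
    · show t.mul _ _ = 0 ∨ t.mul _ _ = 1
      rcases ha01 with h1 | h1 <;> rcases hb01 with h2 | h2 <;> rw [h1, h2]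
      · exact Or.inl (t.mul_zero' I01_zero)
      · exact Or.inl (by rw [tmul_comm' I01_zero I01_one]; exact t.mul_zero' I01_one)
      · exact Or.inl (t.mul_zero' I01_one)
      · exact Or.inr (mul_x_one I01_one)
  | impl a b iha ihb =>
    obtain ⟨ha, ha01⟩ := iha
    obtain ⟨hb, hb01⟩ := ihb
    constructor
    · show resid t _ _ = resid lukT _ _
      rw [← ha, ← hb]
      rcases ha01 with h1 | h1 <;> rcases hb01 with h2 | h2 <;> rw [h1, h2]
      · rw [N_zero, resid_luk I01_zero I01_zero]; norm_num
      · rw [resid_eq_one_of_le t I01_zero I01_one zero_le_one,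
          resid_luk I01_zero I01_one]; norm_num
      · rw [resid_one_zero, resid_luk I01_one I01_zero]; norm_num
      · rw [resid_eq_one_of_le t I01_one I01_one le_rfl, resid_luk I01_one I01_one]; norm_num
    · show resid t _ _ = 0 ∨ resid t _ _ = 1
      rcases ha01 with h1 | h1 <;> rcases hb01 with h2 | h2 <;> rw [h1, h2]
      · exact Or.inr N_zero
      · exact Or.inr (resid_eq_one_of_le t I01_zero I01_one zero_le_one)
      · exact Or.inl (resid_one_zero t)
      · exact Or.inr (resid_eq_one_of_le t I01_one I01_one le_rfl)

end Luk

/-! ### The separation construction (Łukasiewicz case) -/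

/-- The doubling map `e ↦ e ⊕ e = ¬(¬e ⊙ ¬e)`. -/
def DD (t : ContTNorm) (z : ℝ) : ℝ :=
  resid t (t.mul (resid t z 0) (resid t z 0)) 0

section Sep
variable {t : ContTNorm} {x y z u v c : ℝ}

lemma DD_mem (hz : z ∈ I01) : DD t z ∈ I01 :=
  resid_mem_I01 t (mul_mem' (resid_mem_I01 t hz I01_zero) (resid_mem_I01 t hz I01_zero)) I01_zero

lemma DD_mono (hx : x ∈ I01) (hy : y ∈ I01) (h : x ≤ y) : DD t x ≤ DD t y := by
  have hNx := resid_mem_I01 t hx I01_zero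
  have hNy := resid_mem_I01 t hy I01_zero
  have h1 : resid t y 0 ≤ resid t x 0 := N_anti hx hy h
  have h2 : t.mul (resid t y 0) (resid t y 0) ≤ t.mul (resid t x 0) (resid t x 0) :=
    mul_mono' hNy hNy hNx hNx h1 h1
  exact resid_anti1 (mul_mem' hNy hNy) (mul_mem' hNx hNx) I01_zero h2

lemma le_DD (hz : z ∈ I01) : z ≤ DD t z := by
  have hNz := resid_mem_I01 t hz I01_zero
  have h1 : t.mul (resid t z 0) (resid t z 0) ≤ resid t z 0 := mul_le_left hNz hNz
  exact (le_NN hz).trans (resid_anti1 (mul_mem' hNz hNz) hNz I01_zero h1)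

lemma Dit_mem (hz : z ∈ I01) : ∀ n, (DD t)^[n] z ∈ I01 := by
  intro n
  induction n generalizing z with
  | zero => exact hz
  | succ n ih =>
    rw [Function.iterate_succ_apply]
    exact ih (DD_mem hz)
  
lemma Dit_mono (n : ℕ) (hx : x ∈ I01) (hy : y ∈ I01) (h : x ≤ y) :
    (DD t)^[n] x ≤ (DD t)^[n] y := by
  induction n generalizing x y with
  | zero => exact h
  | succ n ih =>
    rw [Function.iterate_succ_apply, Function.iterate_succ_apply]
    exact ih (DD_mem hx) (DD_mem hy) (DD_mono hx hy h)

lemma pi_core (hy : y ∈ I01) (hz : z ∈ I01) (h : 0 < t.mul y z) :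
    resid t z 0 ≤ t.mul y (resid t (t.mul y z) 0) := by
  have hNz := resid_mem_I01 t hz I01_zero
  have hNzy : resid t z 0 ≤ y := by
    by_contra hc
    have hyNz : y ≤ resid t z 0 := (not_le.mp hc).le
    have : t.mul y z ≤ t.mul (resid t z 0) z := mul_mono_l hy hz hNz hyNz
    rw [tmul_comm' hNz hz, mul_N_self hz] at this
    linarith
  have hdiv : t.mul y (resid t y (resid t z 0)) = resid t z 0 := by
    rw [mul_resid hy hNz, min_eq_right hNzy]
  have hle : resid t y (resid t z 0) ≤ resid t (t.mul y z) 0 := by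
    refine le_resid (resid_mem_I01 t hy hNz) ?_
    have hrI := resid_mem_I01 t hy hNz
    calc t.mul (t.mul y z) (resid t y (resid t z 0))
        = t.mul (t.mul z y) (resid t y (resid t z 0)) := by rw [tmul_comm' hy hz]
      _ = t.mul z (t.mul y (resid t y (resid t z 0))) := mul_assoc' hz hy hrI
      _ = t.mul z (resid t z 0) := by rw [hdiv]
      _ ≤ 0 := le_of_eq (mul_N_self hz)
  calc resid t z 0 = t.mul y (resid t y (resid t z 0)) := hdiv.symm
    _ ≤ t.mul y (resid t (t.mul y z) 0) :=
        mul_mono_r hy (resid_mem_I01 t hy hNz)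
          (resid_mem_I01 t (mul_mem' hy hz) I01_zero) hle

lemma mul_sq_mul (hx : x ∈ I01) (hy : y ∈ I01) :
    t.mul (t.mul x y) (t.mul x y) = t.mul (t.mul x x) (t.mul y y) := by
  have hxy := mul_mem' (t := t) hx hy
  have hyy := mul_mem' (t := t) hy hy
  calc t.mul (t.mul x y) (t.mul x y)
      = t.mul x (t.mul y (t.mul x y)) := mul_assoc' hx hy hxy
    _ = t.mul x (t.mul (t.mul y x) y) := by rw [mul_assoc' hy hx hy]
    _ = t.mul x (t.mul (t.mul x y) y) := by rw [tmul_comm' hy hx]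
    _ = t.mul x (t.mul x (t.mul y y)) := by rw [mul_assoc' hx hy hy]
    _ = t.mul (t.mul x x) (t.mul y y) := (mul_assoc' hx hx hyy).symm

lemma pi_lemma (hu : u ∈ I01) (hv : v ∈ I01) (hvu : v < u) (hv2 : 0 < t.mul v v) :
    resid t (t.mul (resid t u v) (resid t u v)) 0
      ≤ t.mul (t.mul u u) (resid t (t.mul v v) 0) := by
  set c := resid t u v with hc
  have hcI : c ∈ I01 := resid_mem_I01 t hu hv
  have huc : t.mul u c = v := by rw [hc, mul_resid hu hv, min_eq_right hvu.le]
  have hvv : t.mul v v = t.mul (t.mul u u) (t.mul c c) := by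
    rw [← huc, mul_sq_mul hu hcI]
  have h0 : 0 < t.mul (t.mul u u) (t.mul c c) := hvv ▸ hv2
  have := pi_core (mul_mem' hu hu) (mul_mem' hcI hcI) h0
  rw [← hvv] at this
  exact this

lemma contrapose_resid {a b : ℝ} (ha : a ∈ I01) (hb : b ∈ I01)
    (hinvb : resid t (resid t b 0) 0 = b) (hba : b < a) :
    resid t (resid t b 0) (resid t a 0) = resid t a b := by
  have hNa := resid_mem_I01 t ha I01_zero
  have hNb := resid_mem_I01 t hb I01_zero
  have hab := resid_mem_I01 t ha hb
  have hNab := resid_mem_I01 t hNb hNa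
  have hNaNb : resid t a 0 ≤ resid t b 0 := N_anti hb ha hba.le
  refine le_antisymm ?_ ?_
  · -- resid Nb Na ≤ resid a b
    refine le_resid hNab ?_
    have hkey : t.mul (resid t b 0) (t.mul a (resid t (resid t b 0) (resid t a 0))) ≤ 0 := by
      calc t.mul (resid t b 0) (t.mul a (resid t (resid t b 0) (resid t a 0)))
          = t.mul a (t.mul (resid t b 0) (resid t (resid t b 0) (resid t a 0))) := by
            rw [← mul_assoc' hNb ha hNab, tmul_comm' hNb ha, mul_assoc' ha hNb hNab]
        _ = t.mul a (min (resid t b 0) (resid t a 0)) := by rw [mul_resid hNb hNa]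
        _ = t.mul a (resid t a 0) := by rw [min_eq_right hNaNb]
        _ ≤ 0 := le_of_eq (mul_N_self ha)
    have := le_N_of_mul_eq_zero hNb (mul_mem' ha hNab)
      (le_antisymm hkey (mul_mem' hNb (mul_mem' ha hNab)).1)
    rwa [hinvb] at this
  · -- resid a b ≤ resid Nb Na
    refine le_resid hab ?_
    refine le_resid (mul_mem' hNb hab) ?_
    calc t.mul a (t.mul (resid t b 0) (resid t a b))
        = t.mul (resid t b 0) (t.mul a (resid t a b)) := by
          rw [← mul_assoc' ha hNb hab, tmul_comm' ha hNb, mul_assoc' hNb ha hab]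
      _ = t.mul (resid t b 0) (min a b) := by rw [mul_resid ha hb]
      _ = t.mul (resid t b 0) b := by rw [min_eq_right hba.le]
      _ ≤ 0 := by rw [tmul_comm' hNb hb]; exact le_of_eq (mul_N_self hb)

end Sep

section SepMain
variable {t : ContTNorm}

lemma ominus_pos {T : TruthAlg t} {a b : ℝ} (haT : a ∈ T.carrier) (hbT : b ∈ T.carrier)
    (hinvb : resid t (resid t b 0) 0 = b) (hba : b < a) :
    0 < t.mul a (resid t b 0) := by
  have ha := T.subset haT
  have hb := T.subset hbT
  have hNb := resid_mem_I01 t hb I01_zero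
  rcases eq_or_lt_of_le (mul_mem' (t := t) ha hNb).1 with h0 | h0
  · exfalso
    have h1 : resid t b 0 ≤ resid t a 0 := le_N_of_mul_eq_zero ha hNb h0.symm
    have h2 : resid t (resid t a 0) 0 ≤ resid t (resid t b 0) 0 :=
      N_anti hNb (resid_mem_I01 t ha I01_zero) h1
    rw [hinvb] at h2
    have h3 : a ≤ b := (le_NN ha).trans h2
    linarith
  · exact h0

lemma sep_lemma (T : TruthAlg t)
    (hinv : ∀ x ∈ T.carrier, resid t (resid t x 0) 0 = x) :
    ∀ n : ℕ, ∀ a b : ℝ, a ∈ T.carrier → b ∈ T.carrier → b < a →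
      (DD t)^[n] (t.mul a (resid t b 0)) = 1 →
      ∃ F : Formula, eval t (fun _ => b) F = 0 ∧ 0 < eval t (fun _ => a) F := by
  intro n
  induction n with
  | zero =>
    intro a b haT hbT hba h1
    have ha := T.subset haT
    have hb := T.subset hbT
    have hNb := resid_mem_I01 t hb I01_zero
    rw [Function.iterate_zero_apply] at h1
    obtain ⟨ha1, hNb1⟩ := tmul_eq_one ha hNb h1
    have hb0 : b = 0 := by
      have := hinv b hbT
      rw [hNb1, resid_one_zero] at this
      exact this.symm
    exact ⟨.var 0, by show b = 0; exact hb0, by show (0:ℝ) < a; rw [ha1]; norm_num⟩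
  | succ n ih =>
    intro a b haT hbT hba h1
    have ha := T.subset haT
    have hb := T.subset hbT
    have hNb := resid_mem_I01 t hb I01_zero
    have hNa := resid_mem_I01 t ha I01_zero
    have he0 : 0 < t.mul a (resid t b 0) := ominus_pos haT hbT (hinv b hbT) hba
    set e := t.mul a (resid t b 0) with he
    have heI : e ∈ I01 := mul_mem' ha hNb
    set cc := resid t a b with hcc
    have hccI : cc ∈ I01 := resid_mem_I01 t ha hb
    have hNe : resid t e 0 = cc := by
      rw [he, resid_curry ha hNb I01_zero, hinv b hbT, hcc]
    have hDDe : DD t e = resid t (t.mul cc cc) 0 := by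
      rw [DD, hNe]
    rw [Function.iterate_succ_apply] at h1
    by_cases hb2 : 0 < t.mul b b
    · -- squaring step
      have hab : t.mul a cc = b := by rw [hcc, mul_resid ha hb, min_eq_right hba.le]
      have hbb : t.mul b b = t.mul (t.mul a a) (t.mul cc cc) := by
        rw [← hab, mul_sq_mul ha hccI]
      have hkey : DD t e ≤ t.mul (t.mul a a) (resid t (t.mul b b) 0) := by
        rw [hDDe]
        have h0 : 0 < t.mul (t.mul a a) (t.mul cc cc) := hbb ▸ hb2
        have := pi_core (mul_mem' ha ha) (mul_mem' hccI hccI) h0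
        rwa [← hbb] at this
      have ha2T : t.mul a a ∈ T.carrier := T.mul_mem a haT a haT
      have hb2T : t.mul b b ∈ T.carrier := T.mul_mem b hbT b hbT
      have ha2I := mul_mem' (t := t) ha ha
      have hb2I := mul_mem' (t := t) hb hb
      have hNb2 := resid_mem_I01 t hb2I I01_zero
      have he'I : t.mul (t.mul a a) (resid t (t.mul b b) 0) ∈ I01 := mul_mem' ha2I hNb2
      have he'pos : 0 < t.mul (t.mul a a) (resid t (t.mul b b) 0) :=
        lt_of_lt_of_le (lt_of_lt_of_le he0 (le_DD heI)) hkey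
      have hb2a2 : t.mul b b < t.mul a a := by
        rcases le_total (t.mul a a) (t.mul b b) with h | h
        · exfalso
          have : t.mul (t.mul a a) (resid t (t.mul b b) 0) ≤ t.mul (t.mul b b) (resid t (t.mul b b) 0) :=
            mul_mono_l ha2I hNb2 hb2I h
          rw [mul_N_self hb2I] at this
          linarith
        · rcases eq_or_lt_of_le h with heq | hlt
          · exfalso
            have : t.mul (t.mul a a) (resid t (t.mul b b) 0) = 0 := by
              rw [heq]; exact mul_N_self ha2I
            linarith
          · exact hlt
      have hDn : (DD t)^[n] (t.mul (t.mul a a) (resid t (t.mul b b) 0)) = 1 := by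
        refine le_antisymm (Dit_mem he'I n).2 ?_
        calc (1:ℝ) = (DD t)^[n] (DD t e) := h1.symm
          _ ≤ (DD t)^[n] (t.mul (t.mul a a) (resid t (t.mul b b) 0)) :=
              Dit_mono n (DD_mem heI) he'I hkey
      obtain ⟨G, hG0, hG1⟩ := ih (t.mul a a) (t.mul b b) ha2T hb2T hb2a2 hDn
      refine ⟨subst G (.conj (.var 0) (.var 0)), ?_, ?_⟩
      · rw [eval_subst]
        exact hG0
      · rw [eval_subst]
        exact hG1
    · have hb2' : t.mul b b = 0 := le_antisymm (not_lt.mp hb2) (mul_mem' hb hb).1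
      by_cases ha2 : 0 < t.mul a a
      · exact ⟨.conj (.var 0) (.var 0), by show t.mul b b = 0; exact hb2',
          by show (0:ℝ) < t.mul a a; exact ha2⟩
      · have ha2' : t.mul a a = 0 := le_antisymm (not_lt.mp ha2) (mul_mem' ha ha).1
        have haNa : a ≤ resid t a 0 := le_N_of_mul_eq_zero ha ha ha2'
        have hnanb : resid t a 0 ≤ resid t b 0 := N_anti hb ha hba.le
        have hNaT : resid t a 0 ∈ T.carrier := T.resid_mem a haT 0 T.zero_mem
        have hNbT : resid t b 0 ∈ T.carrier := T.resid_mem b hbT 0 T.zero_mem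
        by_cases hna2 : 0 < t.mul (resid t a 0) (resid t a 0)
        · -- sigma step
          have hnb2 : 0 < t.mul (resid t b 0) (resid t b 0) := by
            rcases eq_or_lt_of_le (mul_mem' (t := t) hNb hNb).1 with h0 | h0
            · exfalso
              have h2 : resid t b 0 ≤ resid t (resid t b 0) 0 :=
                le_N_of_mul_eq_zero hNb hNb h0.symm
              rw [hinv b hbT] at h2
              have : a ≤ b := haNa.trans (hnanb.trans h2)
              linarith
            · exact h0
          have hna2I := mul_mem' (t := t) hNa hNa
          have hnb2I := mul_mem' (t := t) hNb hNb
          set sa := resid t (t.mul (resid t a 0) (resid t a 0)) 0 with hsa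
          set sb := resid t (t.mul (resid t b 0) (resid t b 0)) 0 with hsb
          have hsaI : sa ∈ I01 := resid_mem_I01 t hna2I I01_zero
          have hsbI : sb ∈ I01 := resid_mem_I01 t hnb2I I01_zero
          have hsaT : sa ∈ T.carrier :=
            T.resid_mem _ (T.mul_mem _ hNaT _ hNaT) 0 T.zero_mem
          have hsbT : sb ∈ T.carrier :=
            T.resid_mem _ (T.mul_mem _ hNbT _ hNbT) 0 T.zero_mem
          have hNsb : resid t sb 0 = t.mul (resid t b 0) (resid t b 0) :=
            hinv _ (T.mul_mem _ hNbT _ hNbT)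
          have hnab : resid t a 0 < resid t b 0 := by
            rcases eq_or_lt_of_le hnanb with heq | hlt
            · exfalso
              have h2 := hinv a haT
              have h3 := hinv b hbT
              rw [heq] at h2
              rw [h2] at h3
              exact absurd h3 hba.ne'
            · exact hlt
          have hkey : DD t e ≤ t.mul sa (resid t sb 0) := by
            rw [hDDe, hNsb]
            have hcontr : resid t (resid t b 0) (resid t a 0) = cc :=
              contrapose_resid ha hb (hinv b hbT) hba
            have := pi_lemma hNb hNa hnab hna2
            rw [hcontr] at this
            calc resid t (t.mul cc cc) 0
                ≤ t.mul (t.mul (resid t b 0) (resid t b 0)) (resid t (t.mul (resid t a 0) (resid t a 0)) 0) := this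
              _ = t.mul sa (t.mul (resid t b 0) (resid t b 0)) := by
                  rw [hsa, tmul_comm' hnb2I (resid_mem_I01 t hna2I I01_zero)]
          have he'I : t.mul sa (resid t sb 0) ∈ I01 :=
            mul_mem' hsaI (resid_mem_I01 t hsbI I01_zero)
          have he'pos : 0 < t.mul sa (resid t sb 0) :=
            lt_of_lt_of_le (lt_of_lt_of_le he0 (le_DD heI)) hkey
          have hsbsa : sb < sa := by
            rcases le_total sa sb with h | h
            · exfalso
              have h2 : t.mul sa (resid t sb 0) ≤ t.mul sb (resid t sb 0) :=
                mul_mono_l hsaI (resid_mem_I01 t hsbI I01_zero) hsbI h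
              rw [mul_N_self hsbI] at h2
              linarith
            · rcases eq_or_lt_of_le h with heq | hlt
              · exfalso
                have h2 : t.mul sa (resid t sb 0) = 0 := by
                  rw [heq]; exact mul_N_self hsaI
                linarith
              · exact hlt
          have hDn : (DD t)^[n] (t.mul sa (resid t sb 0)) = 1 := by
            refine le_antisymm (Dit_mem he'I n).2 ?_
            calc (1:ℝ) = (DD t)^[n] (DD t e) := h1.symm
              _ ≤ (DD t)^[n] (t.mul sa (resid t sb 0)) :=
                  Dit_mono n (DD_mem heI) he'I hkey
          obtain ⟨G, hG0, hG1⟩ := ih sa sb hsaT hsbT hsbsa hDn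
          refine ⟨subst G sigmaFormula, ?_, ?_⟩
          · rw [eval_subst]
            have : eval t (fun _ => b) sigmaFormula = sb := rfl
            rw [this]
            exact hG0
          · rw [eval_subst]
            have : eval t (fun _ => a) sigmaFormula = sa := rfl
            rw [this]
            exact hG1
        · -- fixpoint case : na * na = 0
          have hna2' : t.mul (resid t a 0) (resid t a 0) = 0 :=
            le_antisymm (not_lt.mp hna2) (mul_mem' hNa hNa).1
          have hsa1 : resid t (t.mul (resid t a 0) (resid t a 0)) 0 = 1 := by
            rw [hna2', N_zero]
          have hnb2 : 0 < t.mul (resid t b 0) (resid t b 0) := by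
            rcases eq_or_lt_of_le (mul_mem' (t := t) hNb hNb).1 with h0 | h0
            · exfalso
              have h2 : resid t b 0 ≤ resid t (resid t b 0) 0 :=
                le_N_of_mul_eq_zero hNb hNb h0.symm
              rw [hinv b hbT] at h2
              have : a ≤ b := haNa.trans (hnanb.trans h2)
              linarith
            · exact h0
          set sb := resid t (t.mul (resid t b 0) (resid t b 0)) 0 with hsb
          have hnb2I := mul_mem' (t := t) hNb hNb
          have hsbI : sb ∈ I01 := resid_mem_I01 t hnb2I I01_zero
          have hsbT : sb ∈ T.carrier :=
            T.resid_mem _ (T.mul_mem _ hNbT _ hNbT) 0 T.zero_mem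
          have hsblt1 : sb < 1 := by
            rcases eq_or_lt_of_le hsbI.2 with heq | hlt
            · exfalso
              have h2 : t.mul (resid t b 0) (resid t b 0) ≤ 0 := by
                have := mul_le_of_le_resid hnb2I I01_zero I01_one (le_of_eq heq.symm)
                rwa [mul_x_one hnb2I] at this
              linarith
            · exact hlt
          rcases eq_or_lt_of_le hsbI.1 with hsb0 | hsb0
          · -- sb = 0 : sigmaFormula works directly
            refine ⟨sigmaFormula, ?_, ?_⟩
            · show sb = 0; exact hsb0.symm
            · show (0:ℝ) < resid t (t.mul (resid t a 0) (resid t a 0)) 0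
              rw [hsa1]; norm_num
          · -- 0 < sb < 1 : use archimedean power
            have hNsb : 0 < resid t sb 0 := by
              rcases eq_or_lt_of_le (resid_mem_I01 t hsbI I01_zero).1 with h0 | h0
              · exfalso
                have h2 := hinv sb hsbT
                rw [← h0, N_zero] at h2
                linarith
              · exact h0
            obtain ⟨m, hm⟩ := arch hsbI hsb0 hNsb
            refine ⟨subst (powFormula m) sigmaFormula, ?_, ?_⟩
            · rw [eval_subst]
              have h2 : eval t (fun _ => b) sigmaFormula = sb := rfl
              rw [h2, eval_powFormula, hm]
            · rw [eval_subst]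
              have h2 : eval t (fun _ => a) sigmaFormula
                  = resid t (t.mul (resid t a 0) (resid t a 0)) 0 := rfl
              rw [h2, hsa1, eval_powFormula, pw_base_one]
              norm_num

lemma Dit_eq_pow (T : TruthAlg t)
    (hinv : ∀ x ∈ T.carrier, resid t (resid t x 0) 0 = x) :
    ∀ n : ℕ, ∀ e ∈ T.carrier, (DD t)^[n] e = resid t (pw t (resid t e 0) (2^n)) 0 := by
  intro n
  induction n with
  | zero =>
    intro e heT
    have he := T.subset heT
    rw [Function.iterate_zero_apply, pow_zero, pw_one_exp (resid_mem_I01 t he I01_zero)]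
    exact (hinv e heT).symm
  | succ n ih =>
    intro e heT
    have he := T.subset heT
    have hNe := resid_mem_I01 t he I01_zero
    have hDeT : DD t e ∈ T.carrier := by
      have hNeT : resid t e 0 ∈ T.carrier := T.resid_mem e heT 0 T.zero_mem
      exact T.resid_mem _ (T.mul_mem _ hNeT _ hNeT) 0 T.zero_mem
    rw [Function.iterate_succ_apply, ih (DD t e) hDeT]
    have hND : resid t (DD t e) 0 = t.mul (resid t e 0) (resid t e 0) := by
      have hNeT : resid t e 0 ∈ T.carrier := T.resid_mem e heT 0 T.zero_mem
      exact hinv _ (T.mul_mem _ hNeT _ hNeT)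
    rw [hND, pw_sq hNe, show 2 * 2^n = 2^(n+1) by rw [pow_succ]; ring]

/-- The main separation result: in an involutive algebra, any two distinct elements
can be separated by a unary formula that is `0` at one and positive at the other. -/
lemma sep_exists (T : TruthAlg t)
    (hinv : ∀ x ∈ T.carrier, resid t (resid t x 0) 0 = x)
    {a b : ℝ} (haT : a ∈ T.carrier) (hbT : b ∈ T.carrier) (hba : b < a) :
    ∃ F : Formula, eval t (fun _ => b) F = 0 ∧ 0 < eval t (fun _ => a) F := by
  have ha := T.subset haT
  have hb := T.subset hbT
  have hNb := resid_mem_I01 t hb I01_zero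
  set e := t.mul a (resid t b 0) with he
  have heI : e ∈ I01 := mul_mem' ha hNb
  have heT : e ∈ T.carrier := T.mul_mem a haT _ (T.resid_mem b hbT 0 T.zero_mem)
  have he0 : 0 < e := ominus_pos haT hbT (hinv b hbT) hba
  set q := resid t e 0 with hq
  have hqI : q ∈ I01 := resid_mem_I01 t heI I01_zero
  rcases eq_or_lt_of_le hqI.1 with hq0 | hq0
  · -- q = 0 : e = 1
    have h2 := hinv e heT
    rw [← hq, ← hq0, N_zero] at h2
    refine sep_lemma T hinv 0 a b haT hbT hba ?_
    rw [Function.iterate_zero_apply, ← he, ← h2]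
  · -- 0 < q
    have hNq : 0 < resid t q 0 := by
      have h2 := hinv e heT
      rw [← hq] at h2
      rw [h2]; exact he0
    obtain ⟨m, hm⟩ := arch hqI hq0 hNq
    refine sep_lemma T hinv m a b haT hbT hba ?_
    rw [Dit_eq_pow T hinv m e heT, ← hq]
    have h3 : pw t q (2^m) = 0 := by
      have := pw_anti (t := t) hqI (le_of_lt (Nat.lt_two_pow_self (n := m)))
      rw [hm] at this
      exact le_antisymm this (pw_mem hqI (2^m)).1
    rw [h3, N_zero]

end SepMain

/-! ### P2 from extending Łukasiewicz logic -/

lemma P2_of_luk (t : ContTNorm) (T : TruthAlg t)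
    (hLuk : Taut lukT (fullAlg lukT) ⊆ Taut t T) : P2 (Taut t T) := by
  intro t' T' heq v w hv hw hne
  have hinv : ∀ x ∈ T'.carrier, resid t' (resid t' x 0) 0 = x := by
    apply invol_of_nnimp
    rw [heq]
    exact hLuk nnimp_taut
  obtain ⟨i, hi⟩ := Function.ne_iff.mp hne
  rcases lt_trichotomy (w i) (v i) with hlt | heqq | hlt
  · obtain ⟨F, hF0, hF1⟩ := sep_exists T' hinv (hv i) (hw i) hlt
    refine ⟨subst F (.var i), ?_, ?_⟩
    · rw [eval_subst]
      exact hF1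
    · rw [eval_subst]
      exact hF0
  · exact absurd heqq.symm hi
  · have hNvT : resid t' (v i) 0 ∈ T'.carrier := T'.resid_mem _ (hv i) 0 T'.zero_mem
    have hNwT : resid t' (w i) 0 ∈ T'.carrier := T'.resid_mem _ (hw i) 0 T'.zero_mem
    have hvI := T'.subset (hv i)
    have hwI := T'.subset (hw i)
    have hle : resid t' (w i) 0 ≤ resid t' (v i) 0 := N_anti hvI hwI hlt.le
    have hlt' : resid t' (w i) 0 < resid t' (v i) 0 := by
      rcases eq_or_lt_of_le hle with heq2 | h
      · exfalso
        have h2 := hinv (v i) (hv i)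
        have h3 := hinv (w i) (hw i)
        rw [← heq2, h3] at h2
        exact hi h2.symm
      · exact h
    obtain ⟨G, hG0, hG1⟩ := sep_exists T' hinv hNvT hNwT hlt'
    refine ⟨subst (subst G (.impl (.var 0) .bot)) (.var i), ?_, ?_⟩
    · rw [eval_subst, eval_subst]
      exact hG1
    · rw [eval_subst, eval_subst]
      exact hG0


/-! ### Embedding an involutive algebra into standard Łukasiewicz -/

lemma le_of_forall_le_add_div_pow {A B C : ℝ} (h : ∀ n : ℕ, A ≤ B + C / 2^n) : A ≤ B := by
  by_contra hc
  push_neg at hc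
  rcases le_or_gt C 0 with hC | hC
  · have h0 := h 0
    norm_num at h0
    linarith
  · obtain ⟨n, hn⟩ := exists_pow_lt_of_lt_one (show (0:ℝ) < (A-B)/C from div_pos (by linarith) hC)
      (show (1:ℝ)/2 < 1 by norm_num)
    have h2 : C / 2^n < A - B := by
      have hp : ((1:ℝ)/2)^n = 1/2^n := by rw [div_pow, one_pow]
      rw [hp] at hn
      calc C/2^n = C * (1/2^n) := by ring
        _ < C * ((A-B)/C) := by
            apply mul_lt_mul_of_pos_left hn hC
        _ = A - B := by field_simp
    linarith [h n]

lemma div_pow_step {p q : ℝ} (n : ℕ) (h : 2*p ≤ q) : p/2^n ≤ q/2^(n+1) := by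
  rw [pow_succ, div_le_div_iff₀ (by positivity) (by positivity)]
  calc p * (2^n * 2) = (2*p) * 2^n := by ring
    _ ≤ q * 2^n := mul_le_mul_of_nonneg_right h (by positivity)

lemma div_pow_step' {p q : ℝ} (n : ℕ) (h : p ≤ 2*q) : p/2^(n+1) ≤ q/2^n := by
  rw [pow_succ, div_le_div_iff₀ (by positivity) (by positivity)]
  calc p * 2^n ≤ (2*q) * 2^n := mul_le_mul_of_nonneg_right h (by positivity)
    _ = q * (2^n * 2) := by ring

lemma exists_phi (t : ContTNorm) (T : TruthAlg t)
    (hinv : ∀ x ∈ T.carrier, resid t (resid t x 0) 0 = x)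
    {a : ℝ} (haT : a ∈ T.carrier) (ha0 : 0 < a) (ha1 : a < 1) :
    ∃ φ : ℝ → ℝ, (∀ x ∈ I01, φ x ∈ I01) ∧ φ 0 = 0 ∧
      (∀ x ∈ I01, ∀ y ∈ I01, φ (t.mul x y) = max 0 (φ x + φ y - 1)) ∧
      (∀ x ∈ I01, ∀ y ∈ I01, φ (resid t x y) = min 1 (1 - φ x + φ y)) ∧
      (∀ x ∈ T.carrier, φ x = 1 → x = 1) := by
  classical
  have haI : a ∈ I01 := T.subset haT
  -- square roots by IVT
  have sqrt_ex : ∀ w ∈ I01, ∃ y, y ∈ Set.Icc (0:ℝ) 1 ∧ t.mul y y = w := by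
    intro w hw
    have hcont : ContinuousOn (fun y : ℝ => t.mul y y) I01 := by
      have h : (fun y : ℝ => t.mul y y) = (fun p : ℝ × ℝ => t.mul p.1 p.2) ∘ (fun y => (y, y)) := rfl
      rw [h]
      exact t.continuousOn.comp ((continuous_id.prodMk continuous_id).continuousOn)
        (fun y hy => Set.mk_mem_prod hy hy)
    have hivt := intermediate_value_Icc (zero_le_one (α := ℝ)) hcont
    have hw' : w ∈ Set.Icc (t.mul 0 0) (t.mul 1 1) := by
      rw [t.mul_zero' I01_zero, mul_x_one I01_one]; exact hw
    obtain ⟨y, hyI, hy⟩ := hivt hw'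
    exact ⟨y, hyI, hy⟩
  set f : ℝ → ℝ := fun w => if h : w ∈ I01 then (sqrt_ex w h).choose else 0 with hfdef
  have hfspec : ∀ w ∈ I01, f w ∈ I01 ∧ t.mul (f w) (f w) = w := by
    intro w hw
    have : f w = (sqrt_ex w hw).choose := by rw [hfdef]; simp [hw]
    rw [this]
    exact (sqrt_ex w hw).choose_spec
  set u : ℕ → ℝ := fun n => f^[n] a with hudef
  have hu_succ : ∀ n, u (n+1) = f (u n) := fun n => Function.iterate_succ_apply' f n a
  have hu_zero : u 0 = a := rfl
  have huI_mem : ∀ n, u n ∈ I01 := by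
    intro n; induction n with
    | zero => exact haI
    | succ n ih => rw [hu_succ]; exact (hfspec _ ih).1
  have husq : ∀ n, t.mul (u (n+1)) (u (n+1)) = u n := by
    intro n; rw [hu_succ]; exact (hfspec _ (huI_mem n)).2
  have hu_pos : ∀ n, 0 < u n := by
    intro n; induction n with
    | zero => exact ha0
    | succ n ih =>
      rcases eq_or_lt_of_le (huI_mem (n+1)).1 with h0 | h0
      · exfalso
        have := husq n
        rw [← h0, t.mul_zero' I01_zero] at this
        rw [← this] at ih
        exact lt_irrefl 0 ih
      · exact h0
  have huN : ∀ n, 0 < resid t (u n) 0 := by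
    intro n; induction n with
    | zero =>
      rcases eq_or_lt_of_le (resid_mem_I01 t haI I01_zero).1 with h0 | h0
      · exfalso
        have h2 := hinv a haT
        rw [← h0, N_zero] at h2
        linarith
      · exact h0
    | succ n ih =>
      rcases eq_or_lt_of_le (resid_mem_I01 t (huI_mem (n+1)) I01_zero).1 with h0 | h0
      · exfalso
        have h2 := U_mul (huI_mem (n+1)) (huI_mem (n+1)) h0.symm h0.symm
        rw [husq n] at h2
        rw [h2] at ih
        exact lt_irrefl 0 ih
      · exact h0
  have humono : Monotone u := by
    apply monotone_nat_of_le_succ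
    intro n
    calc u n = t.mul (u (n+1)) (u (n+1)) := (husq n).symm
      _ ≤ u (n+1) := mul_le_left (huI_mem (n+1)) (huI_mem (n+1))
  have hubdd : BddAbove (Set.range u) := ⟨1, by rintro _ ⟨n, rfl⟩; exact (huI_mem n).2⟩
  set d : ℝ := ⨆ n, u n with hddef
  have hda : a ≤ d := by
    have := le_ciSup hubdd 0
    rwa [hu_zero] at this
  have hdI : d ∈ I01 := ⟨ha0.le.trans hda, ciSup_le fun n => (huI_mem n).2⟩
  have hd0 : 0 < d := lt_of_lt_of_le ha0 hda
  have htd : Filter.Tendsto u Filter.atTop (nhds d) := tendsto_atTop_ciSup humono hubdd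
  have hdd : t.mul d d = d := by
    have htd1 : Filter.Tendsto (fun n => u (n+1)) Filter.atTop (nhds d) :=
      htd.comp (Filter.tendsto_add_atTop_nat 1)
    have hpair : Filter.Tendsto (fun n => ((u (n+1), u (n+1)) : ℝ × ℝ)) Filter.atTop
        (nhdsWithin (d, d) (I01 ×ˢ I01)) := by
      rw [tendsto_nhdsWithin_iff]
      exact ⟨htd1.prodMk_nhds htd1,
        Filter.Eventually.of_forall fun n => Set.mk_mem_prod (huI_mem (n+1)) (huI_mem (n+1))⟩
    have hcont := (t.continuousOn (d, d) (Set.mk_mem_prod hdI hdI)).tendsto.comp hpair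
    have heq : ((fun p : ℝ × ℝ => t.mul p.1 p.2) ∘ fun n => (u (n+1), u (n+1)))
        = fun n => u n := by funext n; exact husq n
    rw [heq] at hcont
    exact tendsto_nhds_unique hcont htd
  -- the counting function
  have harch : ∀ n, ∃ m, pw t (u n) m = 0 := fun n => arch (huI_mem n) (hu_pos n) (huN n)
  set k : ℕ → ℝ → ℕ := fun n x => sInf {m | pw t (u n) m ≤ x} with hkdef
  have hkne : ∀ n (x:ℝ), 0 ≤ x → {m | pw t (u n) m ≤ x}.Nonempty := by
    intro n x hx
    obtain ⟨m, hm⟩ := harch n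
    exact ⟨m, by rw [Set.mem_setOf_eq, hm]; exact hx⟩
  have hk_spec : ∀ n (x:ℝ), 0 ≤ x → pw t (u n) (k n x) ≤ x :=
    fun n x hx => Nat.sInf_mem (hkne n x hx)
  have hk_le : ∀ n (x:ℝ) (j:ℕ), pw t (u n) j ≤ x → k n x ≤ j :=
    fun n x j hj => Nat.sInf_le hj
  have hk_min : ∀ n (x:ℝ) (j:ℕ), j < k n x → x < pw t (u n) j := by
    intro n x j hj
    exact not_le.mp (Nat.notMem_of_lt_sInf hj)
  have htower : ∀ n m, pw t (u n) m = pw t (u (n+1)) (2*m) := by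
    intro n m
    rw [← husq n]
    exact pw_sq (huI_mem (n+1)) m
  have hpw_stall : ∀ n j, pw t (u n) (j+1) = pw t (u n) j → pw t (u n) j = 0 := by
    intro n j hst
    have hp : t.mul (pw t (u n) j) (u n) = pw t (u n) j := hst
    have hall : ∀ i, t.mul (pw t (u n) j) (pw t (u n) i) = pw t (u n) j := by
      intro i; induction i with
      | zero => exact mul_x_one (pw_mem (huI_mem n) j)
      | succ i ih =>
        show t.mul (pw t (u n) j) (t.mul (pw t (u n) i) (u n)) = _
        rw [← mul_assoc' (pw_mem (huI_mem n) j) (pw_mem (huI_mem n) i) (huI_mem n), ih, hp]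
    obtain ⟨m, hm⟩ := harch n
    have := hall m
    rw [hm, t.mul_zero' (pw_mem (huI_mem n) j)] at this
    exact this.symm
  have hpw_str : ∀ n j m, j < m → 0 < pw t (u n) m → pw t (u n) m < pw t (u n) j := by
    intro n j m hjm hpos
    have h1 : pw t (u n) m ≤ pw t (u n) (j+1) := pw_anti (huI_mem n) hjm
    rcases eq_or_lt_of_le (pw_succ_le (huI_mem n) j) with heq | hlt
    · exfalso
      have := hpw_stall n j heq
      rw [← this] at hpos
      have h2 := h1.trans_eq heq
      rw [this] at h2
      rw [this] at hpos
      linarith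
    · exact lt_of_le_of_lt h1 hlt
  have hk_dbl : ∀ n (x:ℝ), 0 ≤ x → k (n+1) x ≤ 2 * k n x := by
    intro n x hx
    apply hk_le
    rw [← htower n (k n x)]
    exact hk_spec n x hx
  have hk_lb : ∀ n (x:ℝ), 0 ≤ x → 2 * k n x ≤ k (n+1) x + 1 := by
    intro n x hx
    by_contra hcon
    push_neg at hcon
    have h1 : 1 ≤ k n x := by omega
    have hj : x < pw t (u n) (k n x - 1) := hk_min n x _ (by omega)
    have h2 : pw t (u n) (k n x - 1) = pw t (u (n+1)) (2*(k n x - 1)) := htower n _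
    have h3 : pw t (u (n+1)) (2*(k n x - 1)) ≤ pw t (u (n+1)) (k (n+1) x) :=
      pw_anti (huI_mem (n+1)) (by omega)
    have h4 := hk_spec (n+1) x hx
    rw [h2] at hj
    linarith [h3.trans h4]
  -- the generator F
  set F : ℝ → ℝ := fun x => ⨅ n, ((k n x : ℝ)/2^n) with hFdef
  have hFbdd : ∀ x : ℝ, BddBelow (Set.range (fun n => ((k n x:ℝ)/2^n))) :=
    fun x => ⟨0, by rintro _ ⟨n, rfl⟩; positivity⟩
  have hF_le : ∀ (x:ℝ) (n:ℕ), F x ≤ (k n x:ℝ)/2^n := fun x n => ciInf_le (hFbdd x) n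
  have hF_nonneg : ∀ x, 0 ≤ F x := fun x => le_ciInf (fun n => by positivity)
  have hF_ge : ∀ (x:ℝ), 0 ≤ x → ∀ n, ((k n x:ℝ) - 1)/2^n ≤ F x := by
    intro x hx n
    have hbmono : Monotone (fun n => ((k n x:ℝ) - 1)/2^n) := by
      apply monotone_nat_of_le_succ
      intro i
      apply div_pow_step
      have := hk_lb i x hx
      have hc : (2:ℝ) * (k i x) ≤ (k (i+1) x) + 1 := by exact_mod_cast this
      linarith
    have hamono : Antitone (fun n => ((k n x:ℝ))/2^n) := by
      apply antitone_nat_of_succ_le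
      intro i
      apply div_pow_step'
      have := hk_dbl i x hx
      exact_mod_cast this
    refine le_ciInf ?_
    intro m
    rcases le_total n m with h | h
    · calc ((k n x:ℝ) - 1)/2^n ≤ ((k m x:ℝ) - 1)/2^m := hbmono h
        _ ≤ (k m x:ℝ)/2^m := (div_le_div_iff_of_pos_right (by positivity)).mpr (by linarith)
    · calc ((k n x:ℝ) - 1)/2^n ≤ (k n x:ℝ)/2^n := (div_le_div_iff_of_pos_right (by positivity)).mpr (by linarith)
        _ ≤ (k m x:ℝ)/2^m := hamono h
  -- basic F facts
  have hk1 : ∀ n, k n (1:ℝ) = 0 := by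
    intro n
    have h1 : pw t (u n) 0 ≤ 1 := le_of_eq rfl
    exact Nat.le_zero.mp (hk_le n 1 0 h1)
  have hF1 : F 1 = 0 := by
    refine le_antisymm ?_ (hF_nonneg 1)
    have h1 := hF_le 1 0
    rw [hk1 0] at h1
    simpa using h1
  have hFanti : ∀ (x y:ℝ), 0 ≤ x → x ≤ y → F y ≤ F x := by
    intro x y hx hxy
    refine le_ciInf ?_
    intro n
    have hk' : k n y ≤ k n x := hk_le n y _ ((hk_spec n x hx).trans hxy)
    calc F y ≤ (k n y:ℝ)/2^n := hF_le y n
      _ ≤ (k n x:ℝ)/2^n := (div_le_div_iff_of_pos_right (by positivity)).mpr (by exact_mod_cast hk')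
  have hk00 : 2 ≤ k 0 (0:ℝ) := by
    by_contra hcon
    push_neg at hcon
    have hsp := hk_spec 0 0 le_rfl
    have h01 : k 0 (0:ℝ) = 0 ∨ k 0 (0:ℝ) = 1 := by omega
    rcases h01 with h | h
    · rw [h] at hsp
      have h2 : (1:ℝ) ≤ 0 := hsp
      linarith
    · rw [h] at hsp
      rw [pw_one_exp (huI_mem 0)] at hsp
      linarith [hu_pos 0]
  set M : ℝ := F 0 with hMdef
  have hM1 : (1:ℝ) ≤ M := by
    have h1 := hF_ge 0 le_rfl 0
    have hc : (2:ℝ) ≤ (k 0 (0:ℝ) : ℝ) := by exact_mod_cast hk00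
    simp only [pow_zero, div_one] at h1
    rw [← hMdef] at h1
    linarith
  have hM0 : (0:ℝ) < M := by linarith
  have hFM : ∀ (x:ℝ), 0 ≤ x → F x ≤ M := fun x hx => hFanti 0 x le_rfl hx
  have haux : ∀ (z:ℝ), 0 ≤ z → ∀ n, (k n z : ℝ)/2^n ≤ F z + 1/2^n := by
    intro z hz n
    have h1 := hF_ge z hz n
    rw [sub_div] at h1
    linarith
  -- F is a (truncated) additive generator
  have hFmul : ∀ x ∈ I01, ∀ y ∈ I01, F (t.mul x y) = min (F x + F y) M := by
    intro x hx y hy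
    have hxyI := mul_mem' (t := t) hx hy
    have hub : ∀ n, k n (t.mul x y) ≤ k n x + k n y := by
      intro n
      apply hk_le
      rw [pw_add (huI_mem n) (k n x) (k n y)]
      exact mul_mono' (pw_mem (huI_mem n) _) (pw_mem (huI_mem n) _) hx hy
        (hk_spec n x hx.1) (hk_spec n y hy.1)
    rcases eq_or_lt_of_le hxyI.1 with h0 | h0
    · rw [← h0, ← hMdef]
      rw [min_eq_right]
      apply le_of_forall_le_add_div_pow (C := 2)
      intro n
      have h1 : k n (0:ℝ) ≤ k n x + k n y := by
        apply hk_le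
        rw [pw_add (huI_mem n) _ _]
        have h2 : t.mul (pw t (u n) (k n x)) (pw t (u n) (k n y)) ≤ t.mul x y :=
          mul_mono' (pw_mem (huI_mem n) _) (pw_mem (huI_mem n) _) hx hy
            (hk_spec n x hx.1) (hk_spec n y hy.1)
        rw [← h0] at h2
        exact h2
      calc M ≤ (k n (0:ℝ):ℝ)/2^n := hF_le 0 n
        _ ≤ ((k n x:ℝ) + (k n y:ℝ))/2^n :=
            (div_le_div_iff_of_pos_right (by positivity)).mpr (by exact_mod_cast h1)
        _ = (k n x:ℝ)/2^n + (k n y:ℝ)/2^n := by ring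
        _ ≤ (F x + 1/2^n) + (F y + 1/2^n) := add_le_add (haux x hx.1 n) (haux y hy.1 n)
        _ = F x + F y + 2/2^n := by ring
    · -- 0 < x*y
      have hlb : ∀ n, k n x + k n y ≤ k n (t.mul x y) + 2 := by
        intro n
        rcases Nat.eq_zero_or_pos (k n x) with hx0 | hx0
        · have hx1 : (1:ℝ) ≤ x := by
            have h2 := hk_spec n x hx.1
            rw [hx0] at h2
            exact h2
          have hxeq : x = 1 := le_antisymm hx.2 hx1
          have hmeq : t.mul x y = y := by rw [hxeq, one_mul'' hy]
          rw [hmeq, hx0]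
          omega
        · rcases Nat.eq_zero_or_pos (k n y) with hy0 | hy0
          · have hy1 : (1:ℝ) ≤ y := by
              have h2 := hk_spec n y hy.1
              rw [hy0] at h2
              exact h2
            have hyeq : y = 1 := le_antisymm hy.2 hy1
            have hmeq : t.mul x y = x := by rw [hyeq, mul_x_one hx]
            rw [hmeq, hy0]
            omega
          · by_contra hcon
            push_neg at hcon
            have hub2 : t.mul x y ≤ pw t (u n) (k n x + k n y - 2) := by
              have hx' : x ≤ pw t (u n) (k n x - 1) := (hk_min n x _ (by omega)).le
              have hy' : y ≤ pw t (u n) (k n y - 1) := (hk_min n y _ (by omega)).le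
              calc t.mul x y
                  ≤ t.mul (pw t (u n) (k n x - 1)) (pw t (u n) (k n y - 1)) :=
                    mul_mono' hx hy (pw_mem (huI_mem n) _) (pw_mem (huI_mem n) _) hx' hy'
                _ = pw t (u n) ((k n x - 1) + (k n y - 1)) := (pw_add (huI_mem n) _ _).symm
                _ = pw t (u n) (k n x + k n y - 2) := by congr 1; omega
            have hlow := hk_spec n _ hxyI.1
            have hstr := hpw_str n (k n (t.mul x y)) (k n x + k n y - 2) (by omega)
              (lt_of_lt_of_le h0 hub2)
            linarith
      refine le_antisymm (le_min ?_ (hFM _ hxyI.1)) ?_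
      · apply le_of_forall_le_add_div_pow (C := 2)
        intro n
        calc F (t.mul x y) ≤ (k n (t.mul x y):ℝ)/2^n := hF_le _ n
          _ ≤ ((k n x:ℝ) + (k n y:ℝ))/2^n :=
              (div_le_div_iff_of_pos_right (by positivity)).mpr (by exact_mod_cast hub n)
          _ = (k n x:ℝ)/2^n + (k n y:ℝ)/2^n := by ring
          _ ≤ (F x + 1/2^n) + (F y + 1/2^n) := add_le_add (haux x hx.1 n) (haux y hy.1 n)
          _ = F x + F y + 2/2^n := by ring
      · refine le_trans (min_le_left _ _) ?_
        apply le_of_forall_le_add_div_pow (C := 3)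
        intro n
        calc F x + F y ≤ (k n x:ℝ)/2^n + (k n y:ℝ)/2^n := add_le_add (hF_le x n) (hF_le y n)
          _ = ((k n x:ℝ) + (k n y:ℝ))/2^n := by ring
          _ ≤ ((k n (t.mul x y):ℝ) + 2)/2^n := by
              apply (div_le_div_iff_of_pos_right (by positivity)).mpr
              exact_mod_cast hlb n
          _ = (k n (t.mul x y):ℝ)/2^n + 2/2^n := by ring
          _ ≤ (F (t.mul x y) + 1/2^n) + 2/2^n := by linarith [haux _ hxyI.1 n]
          _ = F (t.mul x y) + 3/2^n := by ring
  have hFresid : ∀ x ∈ I01, ∀ y ∈ I01, F (resid t x y) = max (F y - F x) 0 := by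
    intro x hx y hy
    have hrI := resid_mem_I01 t hx hy
    rcases le_total x y with hxy | hyx
    · rw [resid_eq_one_of_le t hx hy hxy, hF1,
        max_eq_right (by linarith [hFanti x y hx.1 hxy])]
    · rcases eq_or_lt_of_le hyx with heq | hlt
      · rw [heq, resid_eq_one_of_le t hx hx le_rfl, hF1,
          max_eq_right (by linarith)]
      · by_cases hxlt : x < 1
        · have hknx : ∀ n, 1 ≤ k n x := by
            intro n
            by_contra hc
            push_neg at hc
            have h2 := hk_spec n x hx.1
            rw [Nat.lt_one_iff.mp hc] at h2
            have h3 : (1:ℝ) ≤ x := h2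
            linarith
          have hmulxr : t.mul x (resid t x y) = y := by
            rw [mul_resid hx hy, min_eq_right hlt.le]
          have hFr_ub : F (resid t x y) ≤ M - F x := by
            apply le_of_forall_le_add_div_pow (C := 3)
            intro n
            have hk0x : k n x ≤ k n 0 := hk_le n x _ ((hk_spec n 0 le_rfl).trans hx.1)
            have hpwj : pw t (u n) (k n (0:ℝ) - k n x + 1) ≤ resid t x y := by
              apply le_resid (pw_mem (huI_mem n) _)
              have h1 : x ≤ pw t (u n) (k n x - 1) :=
                (hk_min n x _ (by have := hknx n; omega)).le
              calc t.mul x (pw t (u n) (k n (0:ℝ) - k n x + 1))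
                  ≤ t.mul (pw t (u n) (k n x - 1)) (pw t (u n) (k n (0:ℝ) - k n x + 1)) :=
                    mul_mono_l hx (pw_mem (huI_mem n) _) (pw_mem (huI_mem n) _) h1
                _ = pw t (u n) ((k n x - 1) + (k n (0:ℝ) - k n x + 1)) :=
                    (pw_add (huI_mem n) _ _).symm
                _ = pw t (u n) (k n (0:ℝ)) := by congr 1; have := hknx n; omega
                _ ≤ 0 := hk_spec n 0 le_rfl
                _ ≤ y := hy.1
            have hkr : k n (resid t x y) ≤ k n (0:ℝ) - k n x + 1 := hk_le n _ _ hpwj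
            have hjcast : ((k n (0:ℝ) - k n x + 1 : ℕ):ℝ)
                = (k n (0:ℝ):ℝ) - (k n x:ℝ) + 1 := by
              rw [Nat.cast_add, Nat.cast_sub hk0x, Nat.cast_one]
            calc F (resid t x y) ≤ (k n (resid t x y):ℝ)/2^n := hF_le _ n
              _ ≤ ((k n (0:ℝ) - k n x + 1 : ℕ):ℝ)/2^n :=
                  (div_le_div_iff_of_pos_right (by positivity)).mpr (by exact_mod_cast hkr)
              _ = ((k n (0:ℝ):ℝ) - (k n x:ℝ) + 1)/2^n := by rw [hjcast]
              _ = (k n (0:ℝ):ℝ)/2^n - (k n x:ℝ)/2^n + 1/2^n := by ring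
              _ ≤ (M + 1/2^n) - F x + 1/2^n := by
                  have h5 := haux 0 le_rfl n
                  rw [← hMdef] at h5
                  have h6 := hF_le x n
                  linarith
              _ = M - F x + 2/2^n := by ring
              _ ≤ M - F x + 3/2^n := by
                  have h7 : (2:ℝ)/2^n ≤ 3/2^n :=
                    (div_le_div_iff_of_pos_right (by positivity)).mpr (by norm_num)
                  linarith
          have hFy : F y = F x + F (resid t x y) := by
            have h8 := hFmul x hx (resid t x y) hrI
            rw [hmulxr] at h8
            rw [h8, min_eq_left (by linarith)]
          rw [max_eq_left (by linarith [hFanti y x hy.1 hyx])]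
          linarith
        · have hx1 : x = 1 := le_antisymm hx.2 (not_lt.mp hxlt)
          rw [hx1, resid_one_right hy, hF1, sub_zero, max_eq_left (hF_nonneg y)]
  -- positivity of F on T ∖ {1}
  have hNd : resid t d 0 = 0 := N_idem hdI hdd hd0
  have hFpos : ∀ x ∈ T.carrier, x < 1 → 0 < F x := by
    intro x hxT hx1'
    have hxI := T.subset hxT
    have hNx : 0 < resid t x 0 := by
      rcases eq_or_lt_of_le (resid_mem_I01 t hxI I01_zero).1 with h0 | h0
      · exfalso
        have h2 := hinv x hxT
        rw [← h0, N_zero] at h2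
        linarith
      · exact h0
    have hxd : x < d := by
      rcases le_total d x with h | h
      · exfalso
        have h2 : resid t x 0 ≤ resid t d 0 := N_anti hdI hxI h
        rw [hNd] at h2
        linarith
      · rcases eq_or_lt_of_le h with heq | hlt2
        · exfalso
          rw [heq] at hNx
          rw [hNd] at hNx
          exact lt_irrefl 0 hNx
        · exact hlt2
    have htdsq : Filter.Tendsto (fun n => t.mul (u n) (u n)) Filter.atTop (nhds d) := by
      have h2 : Filter.Tendsto (fun n => t.mul (u (n+1)) (u (n+1))) Filter.atTop (nhds d) := by
        rw [show (fun n => t.mul (u (n+1)) (u (n+1))) = fun n => u n from funext husq]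
        exact htd
      exact (Filter.tendsto_add_atTop_iff_nat 1).mp h2
    have hev : ∀ᶠ n in Filter.atTop, x < t.mul (u n) (u n) := htdsq.eventually_const_lt hxd
    obtain ⟨n, hn⟩ := hev.exists
    have hpw2 : pw t (u n) 2 = t.mul (u n) (u n) := by
      show t.mul (pw t (u n) 1) (u n) = _
      rw [pw_one_exp (huI_mem n)]
    have hk3 : 3 ≤ k n x := by
      by_contra hc
      push_neg at hc
      have h2 : pw t (u n) 2 ≤ pw t (u n) (k n x) := pw_anti (huI_mem n) (by omega)
      have h3 := hk_spec n x hxI.1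
      rw [hpw2] at h2
      linarith
    have hc3 : (3:ℝ) ≤ (k n x:ℝ) := by exact_mod_cast hk3
    have hge : (2:ℝ)/2^n ≤ F x := by
      calc (2:ℝ)/2^n ≤ ((k n x:ℝ)-1)/2^n :=
            (div_le_div_iff_of_pos_right (by positivity)).mpr (by linarith)
        _ ≤ F x := hF_ge x hxI.1 n
    have hpn : (0:ℝ) < 2/2^n := by positivity
    linarith
  -- the homomorphism
  refine ⟨fun x => 1 - F x / M, ?_, ?_, ?_, ?_, ?_⟩
  · intro x hxI
    constructor
    · have h1 : F x / M ≤ 1 := (div_le_one hM0).mpr (hFM x hxI.1)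
      simp only []
      linarith
    · have h2 : 0 ≤ F x / M := div_nonneg (hF_nonneg x) hM0.le
      simp only []
      linarith
  · show 1 - F 0 / M = 0
    rw [← hMdef, div_self (ne_of_gt hM0)]; ring
  · intro x hxI y hyI
    show 1 - F (t.mul x y)/M = max 0 ((1 - F x/M) + (1 - F y/M) - 1)
    rw [hFmul x hxI y hyI]
    rcases le_total (F x + F y) M with h | h
    · rw [min_eq_left h, max_eq_right (by
        have h1 : (F x + F y)/M ≤ 1 := (div_le_one hM0).mpr h
        have h2 : (1 - F x/M) + (1 - F y/M) - 1 = 1 - (F x + F y)/M := by ring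
        linarith)]
      ring
    · rw [min_eq_right h, max_eq_left (by
        have h1 : (1:ℝ) ≤ (F x + F y)/M := (one_le_div hM0).mpr h
        have h2 : (1 - F x/M) + (1 - F y/M) - 1 = 1 - (F x + F y)/M := by ring
        linarith), div_self (ne_of_gt hM0)]
      ring
  · intro x hxI y hyI
    show 1 - F (resid t x y)/M = min 1 (1 - (1 - F x/M) + (1 - F y/M))
    rw [hFresid x hxI y hyI]
    rcases le_total (F y - F x) 0 with h | h
    · rw [max_eq_right h, min_eq_left (by
        have h1 : F y / M ≤ F x / M := (div_le_div_iff_of_pos_right hM0).mpr (by linarith)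
        linarith)]
      simp
    · rw [max_eq_left h, min_eq_right (by
        have h1 : F x / M ≤ F y / M := (div_le_div_iff_of_pos_right hM0).mpr (by linarith)
        linarith)]
      ring
  · intro x hxT hphix
    have hxI := T.subset hxT
    rcases eq_or_lt_of_le hxI.2 with h1 | h1
    · exact h1
    · exfalso
      have hFx := hFpos x hxT h1
      have h2 : F x / M = 0 := by linarith
      have h3 : F x = 0 := by
        field_simp at h2
        simpa using h2
      linarith

/-! ### Transfer of Łukasiewicz tautologies -/

lemma embed_taut (t : ContTNorm) (T : TruthAlg t)
    (hinv : ∀ x ∈ T.carrier, resid t (resid t x 0) 0 = x)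
    {a : ℝ} (haT : a ∈ T.carrier) (ha0 : 0 < a) (ha1 : a < 1) :
    ∀ α ∈ Taut lukT (fullAlg lukT), α ∈ Taut t T := by
  obtain ⟨φ, hmem, h0, hmul, hres, hone⟩ := exists_phi t T hinv haT ha0 ha1
  intro α hα v hv
  have hvI : ∀ i, v i ∈ I01 := fun i => T.subset (hv i)
  have htrans : ∀ β : Formula, eval lukT (fun i => φ (v i)) β = φ (eval t v β) := by
    intro β
    induction β with
    | var i => rfl
    | bot => exact h0.symm
    | conj p q ihp ihq =>
      show lukT.mul _ _ = φ (t.mul (eval t v p) (eval t v q))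
      rw [ihp, ihq, mul_luk,
        hmul _ (eval_mem_I01 t v hvI p) _ (eval_mem_I01 t v hvI q)]
    | impl p q ihp ihq =>
      show resid lukT _ _ = φ (resid t (eval t v p) (eval t v q))
      rw [ihp, ihq,
        resid_luk (hmem _ (eval_mem_I01 t v hvI p)) (hmem _ (eval_mem_I01 t v hvI q)),
        hres _ (eval_mem_I01 t v hvI p) _ (eval_mem_I01 t v hvI q)]
  have h1 := hα (fun i => φ (v i)) (fun i => hmem _ (hvI i))
  rw [htrans α] at h1
  exact hone _ (eval_mem_carrier t T v hv α) h1

lemma bool_taut (t : ContTNorm) (T : TruthAlg t)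
    (hbool : ∀ x ∈ T.carrier, x = 0 ∨ x = 1) :
    ∀ α ∈ Taut lukT (fullAlg lukT), α ∈ Taut t T := by
  intro α hα v hv
  have hv01 : ∀ i, v i = 0 ∨ v i = 1 := fun i => hbool _ (hv i)
  have h := (eval_bool t v hv01 α).1
  rw [h]
  refine hα v ?_
  intro i
  rcases hv01 i with h1 | h1 <;> rw [h1]
  · exact I01_zero
  · exact I01_one

/-- Theorem II: a real-valued logic satisfies P2 iff it extends Łukasiewicz logic. -/
theorem P2_iff_extends_Lukasiewicz (t : ContTNorm) (T : TruthAlg t) :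
    P2 (Taut t T) ↔ Taut lukT (fullAlg lukT) ⊆ Taut t T := by
  constructor
  · intro hP2
    by_cases hinv : ∀ x ∈ T.carrier, resid t (resid t x 0) 0 = x
    · by_cases hmid : ∃ a ∈ T.carrier, 0 < a ∧ a < 1
      · obtain ⟨a, haT, ha0, ha1⟩ := hmid
        intro α hα
        exact embed_taut t T hinv haT ha0 ha1 α hα
      · intro α hα
        refine bool_taut t T ?_ α hα
        intro x hxT
        have hx := T.subset hxT
        push_neg at hmid
        rcases eq_or_lt_of_le hx.1 with h | h
        · exact Or.inl h.symm
        · rcases eq_or_lt_of_le hx.2 with h1 | h1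
          · exact Or.inr h1
          · exact absurd h1 (not_lt.mpr (hmid x hxT h))
    · exfalso
      push_neg at hinv
      obtain ⟨x0, hx0T, hne⟩ := hinv
      have hx0 := T.subset hx0T
      have hNx0 : resid t x0 0 = 0 := by
        by_contra hN
        have h0 : 0 < resid t x0 0 :=
          lt_of_le_of_ne (resid_mem_I01 t hx0 I01_zero).1 (Ne.symm hN)
        exact hne (NN_eq hx0 h0)
      have hx01 : x0 ≠ 1 := by
        rintro rfl
        exact hne (by rw [resid_one_zero, N_zero])
      have hclps1 : clps t x0 = 1 := by
        unfold clps
        rw [hNx0]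
        simp
      set v : ℕ → ℝ := fun _ => x0 with hvdef
      set w : ℕ → ℝ := fun i => clps t (v i) with hwdef
      have hvval : IsValuation t T v := fun _ => hx0T
      have hwval : IsValuation t T w := by
        intro i
        show clps t x0 ∈ T.carrier
        rw [hclps1]
        exact T.one_mem
      have hvw : v ≠ w := by
        intro h
        have h2 : v 0 = w 0 := congrFun h 0
        have h3 : x0 = 1 := by
          rw [hwdef] at h2
          exact h2.trans hclps1
        exact hx01 h3
      obtain ⟨α, hα1, hα2⟩ := hP2 t T rfl v w hvval hwval hvw
      have htr := eval_clps t v (fun _ => hx0) α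
      rw [hα2] at htr
      have h4 : eval t v α = 0 := clps_eq_zero (eval_mem_I01 t v (fun _ => hx0) α) htr.symm
      rw [h4] at hα1
      exact lt_irrefl 0 hα1
  · exact P2_of_luk t T

end
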